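/- arXiv:2010.05088 — 4 statements merged into one kernel-verified Lean document; each statement's English description precedes it below -/
import Mathlib

section
/- For every mass m > 0, lattice step ε > 0, and lattice point (x,t) ∈ εℤ² such that (x+t)/ε is an even integer and t > |x|, the probability P(x,t,m,ε) is nonzero. -/
noncomputable section

/-- The `i`-th move of a checker path encoded as `f : Fin n → Bool`
(`true` = upwards-right move `(ε,ε)`, `false` = upwards-left move `(−ε,ε)`);
out-of-range indices default to `true`. -/
def fcStep {n : ℕ} (f : Fin n → Bool) (i : ℕ) : Bool :=
  if h : i < n then f ⟨i, h⟩ else true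

/-- The number of turns of the checker path `f`. -/
def fcTurns {n : ℕ} (f : Fin n → Bool) : ℕ :=
  ((Finset.range (n - 1)).filter fun i => fcStep f i ≠ fcStep f (i + 1)).card

/-- The position (in units of `ε`) of the checker path `f` after `i` moves,
starting from the origin. -/
def fcPos {n : ℕ} (f : Fin n → Bool) (i : ℕ) : ℤ :=
  ∑ j ∈ Finset.range i, (if fcStep f j then (1 : ℤ) else -1)

/-- Checker paths from `(0,0)` to `(εx, εn)` whose first step is to `(ε,ε)`. -/
def fcPaths (n : ℕ) (x : ℤ) : Finset (Fin n → Bool) :=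
  Finset.univ.filter fun f =>
    (∀ i : Fin n, (i : ℕ) = 0 → f i = true) ∧ fcPos f n = x

/-- The amplitude `a(εx, εn, m, ε)`. -/
def fcAmp (m ε : ℝ) (x : ℤ) (n : ℕ) : ℂ :=
  (((1 + m ^ 2 * ε ^ 2) ^ ((1 - (n : ℝ)) / 2) : ℝ) : ℂ) * Complex.I *
    ∑ f ∈ fcPaths n x, (-Complex.I * (m * ε)) ^ fcTurns f

/-- The probability `P(εx, εn, m, ε)` to find the electron at `(εx, εn)`. -/
def fcP (m ε : ℝ) (x : ℤ) (n : ℕ) : ℝ := ‖fcAmp m ε x n‖ ^ 2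



noncomputable section
open Polynomial Finset

/-- coefficient of the "even" polynomial -/
def fcC (a b s : ℕ) : ℝ := (-1)^s * (a.choose s) * (b.choose s)
def fcG (a b s : ℕ) : ℝ := (-1)^s * (a.choose (s+1)) * (b.choose s)

def FP (a b : ℕ) : ℝ[X] := ∑ s ∈ range (b+1), C (fcC a b s) * X^s
def GP (a b : ℕ) : ℝ[X] := ∑ s ∈ range (b+1), C (fcG a b s) * X^s

lemma fcC_eq_zero {a b s : ℕ} (h : b < s) : fcC a b s = 0 := by
  simp [fcC, Nat.choose_eq_zero_of_lt h]

lemma fcG_eq_zero {a b s : ℕ} (h : b < s) : fcG a b s = 0 := by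
  simp [fcG, Nat.choose_eq_zero_of_lt h]

lemma FP_coeff (a b k : ℕ) : (FP a b).coeff k = fcC a b k := by
  rw [FP, finset_sum_coeff]
  simp only [coeff_C_mul, coeff_X_pow, mul_ite, mul_one, mul_zero]
  rw [Finset.sum_ite_eq (range (b+1)) k (fun s => fcC a b s)]
  by_cases h : k ∈ range (b+1)
  · rw [if_pos h]
  · rw [if_neg h]
    exact (fcC_eq_zero (by simpa using h)).symm

lemma GP_coeff (a b k : ℕ) : (GP a b).coeff k = fcG a b k := by
  rw [GP, finset_sum_coeff]
  simp only [coeff_C_mul, coeff_X_pow, mul_ite, mul_one, mul_zero]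
  rw [Finset.sum_ite_eq (range (b+1)) k (fun s => fcG a b s)]
  by_cases h : k ∈ range (b+1)
  · rw [if_pos h]
  · rw [if_neg h]
    exact (fcG_eq_zero (by simpa using h)).symm

/-- the absorption identity over ℝ -/
lemma E1 (n k : ℕ) : ((k:ℝ)+1) * (n.choose (k+1)) = ((n:ℝ) - k) * (n.choose k) := by
  rcases lt_or_ge k n with h | h
  · have := Nat.choose_succ_right_eq n k
    have h' : (n.choose (k+1) : ℝ) * ((k:ℝ)+1) = (n.choose k : ℝ) * ((n:ℝ) - k) := by
      have hcast := congrArg (Nat.cast : ℕ → ℝ) this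
      push_cast [Nat.cast_sub h.le] at hcast
      convert hcast using 2 <;> push_cast <;> ring_nf
    linarith [h']
  · rcases eq_or_lt_of_le h with h | h
    · subst h
      simp [Nat.choose_eq_zero_of_lt (Nat.lt_succ_self n)]
    · simp [Nat.choose_eq_zero_of_lt h, Nat.choose_eq_zero_of_lt (Nat.lt_succ_of_lt h)]
section
variable (a b : ℕ)

lemma scalar1 (s : ℕ) : fcC a b (s+1) * ((s:ℝ)+1) + fcC a b s * s
    = (a:ℝ) * fcC a b s - ((b:ℝ)+1) * fcG a b s := by
  have e1 := E1 a s
  have e2 := E1 b s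
  unfold fcC fcG
  push_cast at e1 e2 ⊢
  linear_combination (-((-1:ℝ)^s * (a.choose (s+1)))) * e2 + ((-1:ℝ)^s * (b.choose s)) * e1

lemma scalar2 (u : ℕ) : fcG a b (u+1) * ((u:ℝ)+2)
    = (a:ℝ) * fcC a b (u+1) + ((b:ℝ) - u) * fcG a b u := by
  have e1 := E1 a (u+1)
  have e2 := E1 b u
  unfold fcC fcG
  push_cast at e1 e2 ⊢
  linear_combination (-((-1:ℝ)^u * (b.choose (u+1)))) * e1 + ((-1:ℝ)^u * (a.choose (u+1))) * e2

lemma identI : (1 + X) * derivative (FP a b)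
    = C (a:ℝ) * FP a b - C ((b:ℝ)+1) * GP a b := by
  ext k
  rw [add_mul, one_mul]
  simp only [coeff_add, coeff_sub, coeff_C_mul, FP_coeff, GP_coeff]
  cases k with
  | zero =>
      rw [mul_coeff_zero]
      simp only [coeff_X_zero, zero_mul, add_zero, coeff_derivative, FP_coeff]
      have h := scalar1 a b 0
      push_cast at h ⊢
      linarith [h]
  | succ k =>
      rw [coeff_X_mul]
      simp only [coeff_derivative, FP_coeff]
      have h1 := scalar1 a b (k+1)
      push_cast at h1 ⊢
      linarith [h1]

lemma identII : X * (1 + X) * derivative (GP a b)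
    = C (a:ℝ) * FP a b + (C (b:ℝ) * X - 1) * GP a b := by
  have hrw : X * (1 + X) * derivative (GP a b)
      = X * derivative (GP a b) + X * (X * derivative (GP a b)) := by ring
  have hrw2 : (C (b:ℝ) * X - 1) * GP a b = C (b:ℝ) * (X * GP a b) - GP a b := by ring
  rw [hrw, hrw2]
  ext k
  obtain _|_|k := k
  · simp only [coeff_add, coeff_sub, coeff_C_mul, mul_coeff_zero, coeff_X_zero, zero_mul,
      FP_coeff, GP_coeff, add_zero, mul_zero]
    simp [fcC, fcG]
  · simp only [coeff_add, coeff_sub, coeff_C_mul, coeff_X_mul, mul_coeff_zero, coeff_X_zero,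
      zero_mul, coeff_derivative, FP_coeff, GP_coeff, add_zero]
    have h := scalar2 a b 0
    push_cast at h ⊢
    linarith [h]
  · simp only [coeff_add, coeff_sub, coeff_C_mul, coeff_X_mul, coeff_derivative,
      FP_coeff, GP_coeff]
    have h1 := scalar2 a b (k+1)
    push_cast at h1 ⊢
    linarith [h1]

end
section
variable (a b : ℕ)

lemma FP_eval_zero : (FP a b).eval 0 = 1 := by
  rw [← coeff_zero_eq_eval_zero, FP_coeff]
  simp [fcC]

lemma FP_ne_zero : FP a b ≠ 0 := by
  intro h
  have := FP_eval_zero a b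
  rw [h] at this
  simp at this

lemma GP_zero (bb : ℕ) : GP 0 bb = 0 := by
  ext k
  rw [GP_coeff]
  simp [fcG, Nat.choose_eq_zero_of_lt (Nat.succ_pos k)]

lemma FP_b_zero (q : ℝ) : (FP a 0).eval q = 1 := by
  rw [FP]
  simp [fcC]

lemma GP_pascal : GP (a+1) b = GP a b + FP a b := by
  ext k
  simp only [coeff_add, GP_coeff, FP_coeff, fcG, fcC, Nat.choose_succ_succ a k]
  push_cast
  ring

lemma FP_pascal : FP a (b+1) = FP a b - X * GP a b := by
  ext k
  obtain _|k := k
  · simp only [coeff_sub, FP_coeff, mul_coeff_zero, coeff_X_zero, zero_mul]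
    simp [fcC]
  · simp only [coeff_sub, FP_coeff, coeff_X_mul, GP_coeff, fcC, fcG,
      Nat.choose_succ_succ b k]
    push_cast
    ring

/-- The two polynomials have no common root in `(0,∞)`. -/
lemma no_common_root {q : ℝ} (hq : 0 < q)
    (hF : (FP a b).eval q = 0) (hG : (GP a b).eval q = 0) : False := by
  classical
  have hPne : FP a b ≠ 0 := FP_ne_zero a b
  have hprime : Prime (X - C q) := prime_X_sub_C q
  have hnd1 : ¬ (X - C q) ∣ (1 + X : ℝ[X]) := by
    rw [dvd_iff_isRoot, IsRoot.def]
    simp only [eval_add, eval_one, eval_X]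
    intro h; linarith
  have hndX : ¬ (X - C q) ∣ (X : ℝ[X]) := by
    rw [dvd_iff_isRoot, IsRoot.def, eval_X]
    exact ne_of_gt hq
  -- derivative of a poly vanishing at q but with eval 0 = 1 is nonzero
  have hder_ne : ∀ P : ℝ[X], P.eval 0 = 1 → P.eval q = 0 → derivative P ≠ 0 := by
    intro P h0 hq' hd
    have hdeg := natDegree_eq_zero_of_derivative_eq_zero hd
    obtain ⟨c, rfl⟩ := Polynomial.natDegree_eq_zero.mp hdeg
    simp only [eval_C] at h0 hq'
    rw [h0] at hq'; exact one_ne_zero hq'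
  set r := (FP a b).rootMultiplicity q with hrdef
  have hr1 : 1 ≤ r := (rootMultiplicity_pos hPne).mpr hF
  by_cases hc : (X - C q) ^ r ∣ GP a b
  · -- use identity I
    have hdvd : (X - C q) ^ r ∣ (1 + X) * derivative (FP a b) := by
      rw [identI]
      exact dvd_sub (Dvd.dvd.mul_left (pow_rootMultiplicity_dvd _ q) _)
        (Dvd.dvd.mul_left hc _)
    have hdvd' : (X - C q) ^ r ∣ derivative (FP a b) :=
      hprime.pow_dvd_of_dvd_mul_left r hnd1 hdvd
    have hFd : derivative (FP a b) ≠ 0 := hder_ne _ (FP_eval_zero a b) hF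
    have := (le_rootMultiplicity_iff hFd).mpr hdvd'
    rw [derivative_rootMultiplicity_of_root hF] at this
    omega
  · -- use identity II
    have hGne : GP a b ≠ 0 := by
      intro h; exact hc (by rw [h]; exact dvd_zero _)
    set s := (GP a b).rootMultiplicity q with hsdef
    have hs1 : 1 ≤ s := (rootMultiplicity_pos hGne).mpr hG
    have hsr : s < r := by
      by_contra hle
      push_neg at hle
      exact hc (dvd_trans (pow_dvd_pow _ hle) (pow_rootMultiplicity_dvd _ q))
    have hdvdF : (X - C q) ^ s ∣ FP a b :=
      dvd_trans (pow_dvd_pow _ hsr.le) (pow_rootMultiplicity_dvd _ q)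
    have hdvd : (X - C q) ^ s ∣ X * (1 + X) * derivative (GP a b) := by
      rw [identII]
      exact dvd_add (Dvd.dvd.mul_left hdvdF _)
        (Dvd.dvd.mul_left (pow_rootMultiplicity_dvd _ q) _)
    have hdvd2 : (X - C q) ^ s ∣ (1 + X) * derivative (GP a b) := by
      apply hprime.pow_dvd_of_dvd_mul_left s hndX
      rwa [← mul_assoc]
    have hdvd' : (X - C q) ^ s ∣ derivative (GP a b) :=
      hprime.pow_dvd_of_dvd_mul_left s hnd1 hdvd2
    have hGd : derivative (GP a b) ≠ 0 := by
      intro hd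
      have hdeg := natDegree_eq_zero_of_derivative_eq_zero hd
      obtain ⟨c, hc'⟩ := Polynomial.natDegree_eq_zero.mp hdeg
      rw [← hc'] at hG hGne
      simp only [eval_C] at hG
      rw [hG] at hGne
      simp at hGne
    have := (le_rootMultiplicity_iff hGd).mpr hdvd'
    rw [derivative_rootMultiplicity_of_root hG] at this
    omega

end
section
open Complex

def wgt (p : ℝ) {n : ℕ} (f : Fin n → Bool) : ℂ := (-Complex.I * (p:ℂ)) ^ fcTurns f

def sPl (p : ℝ) (n : ℕ) (x : ℤ) : ℂ :=
  ∑ f ∈ (fcPaths n x).filter (fun f => fcStep f (n-1) = true), wgt p f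

def sMi (p : ℝ) (n : ℕ) (x : ℤ) : ℂ :=
  ∑ f ∈ (fcPaths n x).filter (fun f => fcStep f (n-1) = false), wgt p f

lemma step_snoc_lt {m : ℕ} (g : Fin (m+1) → Bool) (c : Bool) {i : ℕ} (hi : i < m+1) :
    fcStep (Fin.snoc g c : Fin (m+2) → Bool) i = fcStep g i := by
  rw [fcStep, fcStep, dif_pos hi, dif_pos (by omega : i < m+2)]
  have h : (⟨i, by omega⟩ : Fin (m+2)) = Fin.castSucc ⟨i, hi⟩ := rfl
  rw [h, Fin.snoc_castSucc]

lemma step_snoc_last {m : ℕ} (g : Fin (m+1) → Bool) (c : Bool) :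
    fcStep (Fin.snoc g c : Fin (m+2) → Bool) (m+1) = c := by
  rw [fcStep, dif_pos (by omega : m+1 < m+2)]
  have h : (⟨m+1, by omega⟩ : Fin (m+2)) = Fin.last (m+1) := rfl
  rw [h, Fin.snoc_last]

lemma pos_snoc {m : ℕ} (g : Fin (m+1) → Bool) (c : Bool) :
    fcPos (Fin.snoc g c : Fin (m+2) → Bool) (m+2)
      = fcPos g (m+1) + (if c then 1 else -1) := by
  rw [fcPos, Finset.sum_range_succ, step_snoc_last]
  congr 1
  apply Finset.sum_congr rfl
  intro j hj
  rw [step_snoc_lt g c (Finset.mem_range.mp hj)]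

lemma turns_snoc {m : ℕ} (g : Fin (m+1) → Bool) (c : Bool) :
    fcTurns (Fin.snoc g c : Fin (m+2) → Bool)
      = fcTurns g + (if fcStep g m = c then 0 else 1) := by
  unfold fcTurns
  simp only [Nat.add_sub_cancel]
  rw [Finset.range_add_one, Finset.filter_insert]
  have hfilter : (Finset.range m).filter
        (fun i => fcStep (Fin.snoc g c : Fin (m+2) → Bool) i ≠ fcStep (Fin.snoc g c : Fin (m+2) → Bool) (i+1))
      = (Finset.range m).filter (fun i => fcStep g i ≠ fcStep g (i+1)) := by
    apply Finset.filter_congr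
    intro i hi
    have hi' := Finset.mem_range.mp hi
    rw [step_snoc_lt g c (by omega : i < m+1), step_snoc_lt g c (by omega : i+1 < m+1)]
  have hm : fcStep (Fin.snoc g c : Fin (m+2) → Bool) m = fcStep g m :=
    step_snoc_lt g c (by omega)
  have hm1 : fcStep (Fin.snoc g c : Fin (m+2) → Bool) (m+1) = c := step_snoc_last g c
  by_cases h : fcStep g m = c
  · rw [if_neg (by simp [hm, hm1, h]), hfilter, if_pos h, add_zero]
  · rw [if_pos (by simp [hm, hm1, h]), if_neg h]
    rw [Finset.card_insert_of_notMem (by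
      intro hmem
      exact absurd (Finset.mem_of_mem_filter m hmem) (by simp)), hfilter]

lemma snoc_mem_paths {m : ℕ} (g : Fin (m+1) → Bool) (c : Bool) (x : ℤ) :
    ((Fin.snoc g c : Fin (m+2) → Bool) ∈ fcPaths (m+2) x)
      ↔ g ∈ fcPaths (m+1) (x - (if c then 1 else -1)) := by
  simp only [fcPaths, Finset.mem_filter, Finset.mem_univ, true_and]
  constructor
  · rintro ⟨h1, h2⟩
    refine ⟨?_, ?_⟩
    · intro i hi
      have := h1 (Fin.castSucc i) (by simpa using hi)
      rwa [Fin.snoc_castSucc] at this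
    · rw [pos_snoc] at h2
      omega
  · rintro ⟨h1, h2⟩
    refine ⟨?_, ?_⟩
    · intro i hi
      have hi' : (i : ℕ) < m+1 := by omega
      have heq : i = Fin.castSucc ⟨(i:ℕ), hi'⟩ := by
        apply Fin.ext; simp
      rw [heq, Fin.snoc_castSucc]
      exact h1 _ (by simpa using hi)
    · rw [pos_snoc]
      omega

lemma step_last_eq {m : ℕ} (f : Fin (m+2) → Bool) :
    fcStep f (m+1) = f (Fin.last (m+1)) := by
  rw [fcStep, dif_pos (by omega : m+1 < m+2)]
  rfl

lemma init_snoc' {m : ℕ} (g : Fin (m+1) → Bool) (c : Bool) :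
    Fin.init (Fin.snoc g c : Fin (m+2) → Bool) = g := by
  funext i
  rw [Fin.init, Fin.snoc_castSucc]

lemma rec_key (p : ℝ) (m : ℕ) (x : ℤ) (c : Bool) (d : ℤ) (hd : d = if c then 1 else -1) :
    ∑ f ∈ (fcPaths (m+2) x).filter (fun f => fcStep f (m+2-1) = c), wgt p f
      = ∑ g ∈ fcPaths (m+1) (x - d),
          (-Complex.I * (p:ℂ))^(fcTurns g + (if fcStep g m = c then 0 else 1)) := by
  subst hd
  apply Finset.sum_nbij' (fun f => Fin.init f) (fun g => (Fin.snoc g c : Fin (m+2) → Bool))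
  · intro f hf
    rw [Finset.mem_filter] at hf
    obtain ⟨hf1, hf2⟩ := hf
    have hlast : f (Fin.last (m+1)) = c := (step_last_eq f).symm.trans hf2
    have hsnoc : (Fin.snoc (Fin.init f) c : Fin (m+2) → Bool) = f := by
      rw [← hlast]; exact Fin.snoc_init_self f
    rw [← hsnoc] at hf1
    exact (snoc_mem_paths (Fin.init f) c x).mp hf1
  · intro g hg
    rw [Finset.mem_filter]
    exact ⟨(snoc_mem_paths g c x).mpr hg, step_snoc_last g c⟩
  · intro f hf
    rw [Finset.mem_filter] at hf
    have hlast : f (Fin.last (m+1)) = c := (step_last_eq f).symm.trans hf.2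
    rw [← hlast]; exact Fin.snoc_init_self f
  · intro g _
    exact init_snoc' g c
  · intro f hf
    rw [Finset.mem_filter] at hf
    have hlast : f (Fin.last (m+1)) = c := (step_last_eq f).symm.trans hf.2
    have hsnoc : (Fin.snoc (Fin.init f) c : Fin (m+2) → Bool) = f := by
      rw [← hlast]; exact Fin.snoc_init_self f
    have : wgt p f = wgt p (Fin.snoc (Fin.init f) c : Fin (m+2) → Bool) := by rw [hsnoc]
    rw [this, wgt, turns_snoc]

lemma sPl_def' (p : ℝ) (m : ℕ) (x : ℤ) :
    sPl p (m+1) x = ∑ f ∈ (fcPaths (m+1) x).filter (fun f => fcStep f m = true), wgt p f := rfl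

lemma sMi_def' (p : ℝ) (m : ℕ) (x : ℤ) :
    sMi p (m+1) x = ∑ f ∈ (fcPaths (m+1) x).filter (fun f => fcStep f m = false), wgt p f := rfl

lemma sPl_rec (p : ℝ) (m : ℕ) (x : ℤ) :
    sPl p (m+2) x = sPl p (m+1) (x-1) + (-Complex.I * p) * sMi p (m+1) (x-1) := by
  have key := rec_key p m x true 1 (by norm_num)
  rw [sPl, key, ← Finset.sum_filter_add_sum_filter_not (fcPaths (m+1) (x-1))
    (fun g => fcStep g m = true)]
  have h1 : ∑ g ∈ (fcPaths (m+1) (x-1)).filter (fun g => fcStep g m = true),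
      (-Complex.I * (p:ℂ))^(fcTurns g + (if fcStep g m = true then 0 else 1))
        = sPl p (m+1) (x-1) := by
    rw [sPl_def']
    apply Finset.sum_congr rfl
    intro g hg
    rw [Finset.mem_filter] at hg
    rw [if_pos hg.2, add_zero, wgt]
  have h2 : ∑ g ∈ (fcPaths (m+1) (x-1)).filter (fun g => ¬ (fcStep g m = true)),
      (-Complex.I * (p:ℂ))^(fcTurns g + (if fcStep g m = true then 0 else 1))
        = (-Complex.I * (p:ℂ)) * sMi p (m+1) (x-1) := by
    rw [sMi_def', Finset.mul_sum]
    apply Finset.sum_congr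
    · apply Finset.filter_congr
      intro g _
      simp [Bool.not_eq_true]
    · intro g hg
      rw [Finset.mem_filter] at hg
      rw [if_neg (by simp [hg.2]), wgt, pow_succ]
      ring
  rw [h1, h2]

lemma sMi_rec (p : ℝ) (m : ℕ) (x : ℤ) :
    sMi p (m+2) x = sMi p (m+1) (x+1) + (-Complex.I * p) * sPl p (m+1) (x+1) := by
  have key := rec_key p m x false (-1) (by norm_num)
  rw [sub_neg_eq_add] at key
  rw [sMi, key, ← Finset.sum_filter_add_sum_filter_not (fcPaths (m+1) (x+1))
    (fun g => fcStep g m = false)]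
  have h1 : ∑ g ∈ (fcPaths (m+1) (x+1)).filter (fun g => fcStep g m = false),
      (-Complex.I * (p:ℂ))^(fcTurns g + (if fcStep g m = false then 0 else 1))
        = sMi p (m+1) (x+1) := by
    rw [sMi_def']
    apply Finset.sum_congr rfl
    intro g hg
    rw [Finset.mem_filter] at hg
    rw [if_pos hg.2, add_zero, wgt]
  have h2 : ∑ g ∈ (fcPaths (m+1) (x+1)).filter (fun g => ¬ (fcStep g m = false)),
      (-Complex.I * (p:ℂ))^(fcTurns g + (if fcStep g m = false then 0 else 1))
        = (-Complex.I * (p:ℂ)) * sPl p (m+1) (x+1) := by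
    rw [sPl_def', Finset.mul_sum]
    apply Finset.sum_congr
    · apply Finset.filter_congr
      intro g _
      simp [Bool.not_eq_false]
    · intro g hg
      rw [Finset.mem_filter] at hg
      rw [if_neg (by simp [hg.2]), wgt, pow_succ]
      ring
  rw [h1, h2]

end
section

lemma fin1_eq (f : Fin 1 → Bool) : f = fun _ => f 0 :=
  funext fun i => by rw [Subsingleton.elim i 0]

lemma pos_one (f : Fin 1 → Bool) : fcPos f 1 = if f 0 = true then 1 else -1 := by
  rw [fcPos, Finset.sum_range_one, fcStep, dif_pos one_pos]
  rfl

lemma paths_one (x : ℤ) :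
    fcPaths 1 x = if x = 1 then ({fun _ => true} : Finset (Fin 1 → Bool)) else ∅ := by
  ext f
  simp only [fcPaths, Finset.mem_filter, Finset.mem_univ, true_and]
  by_cases hx : x = 1
  · subst hx
    rw [if_pos rfl, Finset.mem_singleton]
    constructor
    · rintro ⟨h1, _⟩
      rw [fin1_eq f, h1 0 rfl]
    · intro h
      subst h
      exact ⟨fun _ _ => rfl, by rw [pos_one]; simp⟩
  · rw [if_neg hx]
    simp only [Finset.notMem_empty, iff_false]
    rintro ⟨h1, h2⟩
    rw [pos_one, h1 0 rfl, if_pos rfl] at h2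
    exact hx h2.symm

lemma turns_one (f : Fin 1 → Bool) : fcTurns f = 0 := by
  rw [fcTurns]
  simp

lemma step_one_true : fcStep (fun _ => true : Fin 1 → Bool) 0 = true := by
  rw [fcStep, dif_pos one_pos]

lemma sPl_one (p : ℝ) (x : ℤ) : sPl p 1 x = if x = 1 then 1 else 0 := by
  rw [sPl, paths_one]
  by_cases hx : x = 1
  · rw [if_pos hx, if_pos hx, Finset.filter_singleton, if_pos step_one_true,
      Finset.sum_singleton, wgt, turns_one, pow_zero]
  · rw [if_neg hx, if_neg hx, Finset.filter_empty, Finset.sum_empty]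

lemma sMi_one (p : ℝ) (x : ℤ) : sMi p 1 x = 0 := by
  rw [sMi, paths_one]
  by_cases hx : x = 1
  · rw [if_pos hx, Finset.filter_singleton, if_neg (by simp [step_one_true]),
      Finset.sum_empty]
  · rw [if_neg hx, Finset.filter_empty, Finset.sum_empty]

/-- The master classification of the chiral path sums. -/
lemma master (p : ℝ) : ∀ k : ℕ, ∀ x : ℤ,
    (x = (k:ℤ)+1 → sPl p (k+1) x = 1 ∧ sMi p (k+1) x = 0)
    ∧ ((x ≤ -((k:ℤ)+1) ∨ (k:ℤ)+1 < x ∨ ¬ Even (x + ((k:ℤ)+1)))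
        → sPl p (k+1) x = 0 ∧ sMi p (k+1) x = 0)
    ∧ (∀ a b : ℕ, k+1 = a+b+2 → x = (a:ℤ) - (b:ℤ) →
        sPl p (k+1) x = ((-(p^2) * (GP a b).eval (p^2) : ℝ) : ℂ)
        ∧ sMi p (k+1) x = -Complex.I * p * (((FP a b).eval (p^2) : ℝ) : ℂ)) := by
  intro k
  induction k with
  | zero =>
      intro x
      refine ⟨?_, ?_, ?_⟩
      · intro hx
        rw [sPl_one, sMi_one, if_pos (by omega)]
        exact ⟨rfl, rfl⟩
      · intro hx
        have hx1 : x ≠ 1 := by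
          rcases hx with h | h | h
          · omega
          · omega
          · intro h1; exact h (by subst h1; decide)
        rw [sPl_one, sMi_one, if_neg hx1]
        exact ⟨rfl, rfl⟩
      · intro a b hab
        omega
  | succ k IH =>
      intro x
      have hPl := sPl_rec p k x
      have hMi := sMi_rec p k x
      refine ⟨?_, ?_, ?_⟩
      · intro hx
        have h1 := (IH (x-1)).1 (by push_cast; omega)
        have h2 := ((IH (x+1)).2.1 (by right; left; push_cast; omega))
        constructor
        · rw [hPl, h1.1, h1.2]
          ring
        · rw [hMi, h2.1, h2.2]
          ring
      · intro hx
        have hxm : (x-1) ≤ -((k:ℤ)+1) ∨ (k:ℤ)+1 < x-1 ∨ ¬ Even ((x-1) + ((k:ℤ)+1)) := by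
          rcases hx with h | h | h
          · left; push_cast at h ⊢; omega
          · right; left; push_cast at h ⊢; omega
          · right; right
            intro he
            apply h
            have : x + (((k+1:ℕ):ℤ)+1) = (x-1) + ((k:ℤ)+1) + 2 := by push_cast; ring
            rw [this]
            obtain ⟨r, hr⟩ := he
            exact ⟨r+1, by omega⟩
        have hxp : (x+1) ≤ -((k:ℤ)+1) ∨ (k:ℤ)+1 < x+1 ∨ ¬ Even ((x+1) + ((k:ℤ)+1)) := by
          rcases hx with h | h | h
          · left; push_cast at h ⊢; omega
          · right; left; push_cast at h ⊢; omega
          · right; right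
            intro he
            apply h
            have : x + (((k+1:ℕ):ℤ)+1) = (x+1) + ((k:ℤ)+1) := by push_cast; ring
            rw [this]
            exact he
        have h1 := (IH (x-1)).2.1 hxm
        have h2 := (IH (x+1)).2.1 hxp
        constructor
        · rw [hPl, h1.1, h1.2]; ring
        · rw [hMi, h2.1, h2.2]; ring
      · intro a b hab hx
        constructor
        · -- sPl value
          rcases a with _ | a'
          · -- a = 0 : x-1 = -(k+1)
            have hb : b = k := by omega
            have h0 := (IH (x-1)).2.1 (by left; push_cast; omega)
            rw [hPl, h0.1, h0.2, GP_zero]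
            simp
          · have h1 := ((IH (x-1)).2.2 a' b (by omega) (by push_cast at hx ⊢; omega)).1
            have h2 := ((IH (x-1)).2.2 a' b (by omega) (by push_cast at hx ⊢; omega)).2
            rw [hPl, h1, h2, GP_pascal, eval_add]
            push_cast
            linear_combination ((p:ℂ)^2 * (((FP a' b).eval (p^2) : ℝ) : ℂ)) * Complex.I_sq
        · -- sMi value
          rcases b with _ | b'
          · -- b = 0 : x+1 = k+1
            have ha : a = k := by omega
            have h0 := (IH (x+1)).1 (by push_cast; omega)
            rw [hMi, h0.1, h0.2, FP_b_zero]
            push_cast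
            ring
          · have h1 := ((IH (x+1)).2.2 a b' (by omega) (by push_cast at hx ⊢; omega)).1
            have h2 := ((IH (x+1)).2.2 a b' (by omega) (by push_cast at hx ⊢; omega)).2
            rw [hMi, h1, h2, FP_pascal, eval_sub, eval_mul, eval_X]
            push_cast
            ring

end
section

lemma amp_split (m ε : ℝ) (X : ℤ) (n : ℕ) :
    ∑ f ∈ fcPaths n X, (-Complex.I * (m * ε)) ^ fcTurns f
      = sPl (m*ε) n X + sMi (m*ε) n X := by
  have hsum : ∑ f ∈ fcPaths n X, (-Complex.I * (m * ε)) ^ fcTurns f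
      = ∑ f ∈ fcPaths n X, wgt (m*ε) f := by
    apply Finset.sum_congr rfl
    intro f _
    rw [wgt]
    push_cast
    ring
  rw [hsum, sPl, sMi, ← Finset.sum_filter_add_sum_filter_not (fcPaths n X)
    (fun f => fcStep f (n-1) = true)]
  congr 1
  apply Finset.sum_congr _ (fun f _ => rfl)
  apply Finset.filter_congr
  intro f _
  simp [Bool.not_eq_true]

end

/-- The probability to find an electron vanishes nowhere inside the light cone:
for `m > 0`, `ε > 0` and a lattice point `(x,t) = (εX, εn) ∈ εℤ²` with `(x+t)/ε` even
and `t > |x|`, we have `P(x,t,m,ε) ≠ 0`. -/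
theorem stmt0 (m ε : ℝ) (hm : 0 < m) (hε : 0 < ε) (x t : ℝ) (X : ℤ) (n : ℕ)
    (hx : x = ε * X) (ht : t = ε * n) (heven : Even (X + (n : ℤ)))
    (hlt : |x| < t) :
    fcP m ε X n ≠ 0 := by
  -- basic bounds
  have habs : |(X:ℝ)| < (n:ℝ) := by
    rw [hx, ht, abs_mul, abs_of_pos hε] at hlt
    exact lt_of_mul_lt_mul_left hlt hε.le
  have habsZ : |X| < (n:ℤ) := by
    have h := habs
    rw [← Int.cast_abs] at h
    exact_mod_cast h
  obtain ⟨hX1, hX2⟩ := abs_lt.mp habsZ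
  have hn1 : 1 ≤ n := by omega
  obtain ⟨k, rfl⟩ : ∃ k, n = k + 1 := ⟨n - 1, by omega⟩
  -- find a b
  obtain ⟨r, hr⟩ := heven
  push_cast at hr hX1 hX2
  have hr1 : 1 ≤ r := by omega
  have hr2 : r ≤ (k:ℤ) := by omega
  set a : ℕ := (r - 1).toNat with ha
  set b : ℕ := ((k:ℤ) - r).toNat with hb
  have haZ : (a:ℤ) = r - 1 := Int.toNat_of_nonneg (by omega)
  have hbZ : (b:ℤ) = (k:ℤ) - r := Int.toNat_of_nonneg (by omega)
  have hab : k + 1 = a + b + 2 := by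
    have : (k:ℤ) + 1 = (a:ℤ) + b + 2 := by rw [haZ, hbZ]; ring
    exact_mod_cast this
  have hXab : X = (a:ℤ) - (b:ℤ) := by
    rw [haZ, hbZ]; omega
  set p : ℝ := m * ε with hp
  have hppos : 0 < p := mul_pos hm hε
  have hcl := (master p k X).2.2 a b hab hXab
  -- amplitude
  rw [fcP]
  intro hP
  have habs0 : ‖fcAmp m ε X (k+1)‖ = 0 := sq_eq_zero_iff.mp hP
  have hamp0 : fcAmp m ε X (k+1) = 0 := by
    exact norm_eq_zero.mp habs0
  rw [fcAmp, amp_split, hcl.1, hcl.2] at hamp0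
  have hcne : (((1 + m ^ 2 * ε ^ 2) ^ ((1 - ((k+1:ℕ) : ℝ)) / 2) : ℝ) : ℂ) ≠ 0 := by
    rw [Complex.ofReal_ne_zero]
    exact ne_of_gt (Real.rpow_pos_of_pos (by positivity) _)
  have hzero : ((-(p^2) * (GP a b).eval (p^2) : ℝ) : ℂ)
      + -Complex.I * p * (((FP a b).eval (p^2) : ℝ) : ℂ) = 0 := by
    have h2 := mul_eq_zero.mp hamp0
    rcases h2 with h2 | h2
    · rcases mul_eq_zero.mp h2 with h3 | h3
      · exact absurd h3 hcne
      · exact absurd h3 Complex.I_ne_zero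
    · exact h2
  -- separate real and imaginary parts
  have hre := congrArg Complex.re hzero
  have him := congrArg Complex.im hzero
  simp only [Complex.add_re, Complex.add_im, Complex.ofReal_re, Complex.ofReal_im,
    Complex.mul_re, Complex.mul_im, Complex.neg_re, Complex.neg_im, Complex.I_re,
    Complex.I_im, Complex.zero_re, Complex.zero_im] at hre him
  have hG0 : (GP a b).eval (p^2) = 0 := by
    have hq : (0:ℝ) < p^2 := by positivity
    nlinarith [hre]
  have hF0 : (FP a b).eval (p^2) = 0 := by
    nlinarith [him, hppos]
  exact no_common_root a b (by positivity) hF0 hG0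
end
end
end

section
/- For every ε > 0, m ≥ 0, and T ∈ εℤ₊, the expectation of the average electron velocity equals the time-average of the expectations of the instantaneous electron velocity: Σ_{x∈εℤ} (x/T)·(a₁(x,T,m,ε)² + a₂(x,T,m,ε)²) = (ε/T) · Σ_{t=ε,2ε,…,T} Σ_{x∈εℤ} (a₂(x,t,m,ε)² − a₁(x,t,m,ε)²). -/
noncomputable section

/-! ### Auxiliary development -/

/-- Real components of the amplitude, defined by the Dirac recursion:
first component = "last step right" part, second = "last step left" part. -/
def pp (c : ℝ) : ℕ → ℤ → ℝ × ℝ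
  | 0, _ => (0, 0)
  | 1, x => (if x = 1 then 1 else 0, 0)
  | (n+2), x =>
      ((pp c (n+1) (x-1)).1 + c * (pp c (n+1) (x-1)).2,
       (pp c (n+1) (x+1)).2 - c * (pp c (n+1) (x+1)).1)

lemma pp_supp (c : ℝ) : ∀ (n : ℕ) (x : ℤ), (n : ℤ) < |x| → pp c n x = 0
  | 0, x, _ => rfl
  | 1, x, h => by
      have hx : x ≠ 1 := by rcases lt_abs.mp h with h' | h' <;> omega
      simp [pp, hx, Prod.ext_iff]
  | (n+2), x, h => by
      have h1 : ((n:ℤ) + 1) < |x - 1| := by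
        rcases lt_abs.mp h with h' | h' <;> rcases abs_cases (x-1) with ⟨e, _⟩ | ⟨e, _⟩ <;> omega
      have h2 : ((n:ℤ) + 1) < |x + 1| := by
        rcases lt_abs.mp h with h' | h' <;> rcases abs_cases (x+1) with ⟨e, _⟩ | ⟨e, _⟩ <;> omega
      have e1 : pp c (n+1) (x-1) = 0 := pp_supp c (n+1) (x-1) (by push_cast; exact h1)
      have e2 : pp c (n+1) (x+1) = 0 := pp_supp c (n+1) (x+1) (by push_cast; exact h2)
      simp [pp, e1, e2, Prod.ext_iff]

lemma summable_pp_aux (c : ℝ) (n : ℕ) (F : ℤ → ℝ)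
    (hF : ∀ x, pp c n x = 0 → F x = 0) : Summable F := by
  apply summable_of_ne_finset_zero (s := Finset.Icc (-(n:ℤ)) n)
  intro x hx
  apply hF
  apply pp_supp
  rw [lt_abs]
  simp only [Finset.mem_Icc, not_and_or, not_le] at hx
  omega

/-! ### Steps of `snoc` paths -/

lemma fcStep_snoc_lt {n : ℕ} (f : Fin n → Bool) (b : Bool) {i : ℕ} (h : i < n) :
    fcStep (Fin.snoc f b) i = fcStep f i := by
  simp only [fcStep, dif_pos h, dif_pos (Nat.lt_succ_of_lt h)]
  exact @Fin.snoc_castSucc n (fun _ => Bool) b f ⟨i, h⟩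

lemma fcStep_snoc_self {n : ℕ} (f : Fin n → Bool) (b : Bool) :
    fcStep (Fin.snoc f b) n = b := by
  simp only [fcStep, dif_pos (Nat.lt_succ_self n)]
  exact @Fin.snoc_last n (fun _ => Bool) b f

lemma fcStep_zero_eq {n : ℕ} (f : Fin (n+1) → Bool) :
    (∀ i : Fin (n+1), (i : ℕ) = 0 → f i = true) ↔ fcStep f 0 = true := by
  constructor
  · intro h
    simpa [fcStep] using h ⟨0, Nat.succ_pos n⟩ rfl
  · intro h i hi
    have : i = ⟨0, Nat.succ_pos n⟩ := Fin.ext hi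
    subst this
    simpa [fcStep] using h

lemma fcPos_snoc_le {n : ℕ} (f : Fin n → Bool) (b : Bool) {i : ℕ} (h : i ≤ n) :
    fcPos (Fin.snoc f b) i = fcPos f i := by
  unfold fcPos
  refine Finset.sum_congr rfl fun j hj => ?_
  rw [fcStep_snoc_lt f b (lt_of_lt_of_le (Finset.mem_range.mp hj) h)]

lemma fcPos_snoc_top {n : ℕ} (f : Fin n → Bool) (b : Bool) :
    fcPos (Fin.snoc f b) (n+1) = fcPos f n + (if b then 1 else -1) := by
  unfold fcPos
  rw [Finset.sum_range_succ, fcStep_snoc_self]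
  congr 1
  exact fcPos_snoc_le f b le_rfl

lemma fcTurns_snoc {m : ℕ} (f : Fin (m+1) → Bool) (b : Bool) :
    fcTurns (Fin.snoc f b : Fin (m+2) → Bool)
      = fcTurns f + (if fcStep f m = b then 0 else 1) := by
  unfold fcTurns
  have hr : (m + 2 - 1) = m + 1 := rfl
  rw [hr, Finset.range_add_one, Finset.filter_insert]
  have hfil : (Finset.range m).filter
        (fun i => fcStep (Fin.snoc f b : Fin (m+2) → Bool) i
          ≠ fcStep (Fin.snoc f b : Fin (m+2) → Bool) (i+1))
      = (Finset.range ((m+1) - 1)).filter (fun i => fcStep f i ≠ fcStep f (i+1)) := by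
    have : (m + 1 - 1) = m := rfl
    rw [this]
    refine Finset.filter_congr fun i hi => ?_
    have hi' := Finset.mem_range.mp hi
    rw [fcStep_snoc_lt f b (Nat.lt_succ_of_lt hi'), fcStep_snoc_lt f b (Nat.succ_lt_succ hi')]
  have hlast1 : fcStep (Fin.snoc f b : Fin (m+2) → Bool) m = fcStep f m :=
    fcStep_snoc_lt f b (Nat.lt_succ_self m)
  have hlast2 : fcStep (Fin.snoc f b : Fin (m+2) → Bool) (m+1) = b :=
    fcStep_snoc_self f b
  by_cases hb : fcStep f m = b
  · rw [if_neg (by simp [hlast1, hlast2, hb]), hfil, if_pos hb]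
    omega
  · rw [if_pos (by simp [hlast1, hlast2, hb]), Finset.card_insert_of_notMem
      (fun hmem => absurd (Finset.mem_range.mp (Finset.mem_of_mem_filter _ hmem))
        (lt_irrefl m)), hfil, if_neg hb]

lemma fcStep_init_lt {n : ℕ} (f : Fin (n+1) → Bool) {i : ℕ} (h : i < n) :
    fcStep (Fin.init f) i = fcStep f i := by
  simp only [fcStep, dif_pos h, dif_pos (Nat.lt_succ_of_lt h)]
  rfl

/-! ### The sum over paths split by last step -/

/-- Sum over paths ending at `x` whose last step is `b`. -/
def fcA (c : ℝ) (n : ℕ) (x : ℤ) (b : Bool) : ℂ :=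
  ∑ f ∈ (fcPaths n x).filter (fun f => fcStep f (n-1) = b),
    (-Complex.I * (c : ℂ)) ^ fcTurns f

lemma mem_fcPaths {n : ℕ} {x : ℤ} {f : Fin n → Bool} :
    f ∈ fcPaths n x ↔ (∀ i : Fin n, (i : ℕ) = 0 → f i = true) ∧ fcPos f n = x := by
  simp [fcPaths]

lemma sum_snoc (m : ℕ) (x : ℤ) (b : Bool) (w : (Fin (m+2) → Bool) → ℂ) :
    ∑ f ∈ (fcPaths (m+2) x).filter (fun f => fcStep f (m+1) = b), w f
      = ∑ g ∈ fcPaths (m+1) (x - (if b then 1 else -1)), w (Fin.snoc g b) := by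
  refine Finset.sum_nbij' (fun f => Fin.init f) (fun g => Fin.snoc g b) ?_ ?_ ?_ ?_ ?_
  · intro f hf
    rw [Finset.mem_filter] at hf
    obtain ⟨hf1, hf2⟩ := hf
    rw [mem_fcPaths] at hf1 ⊢
    obtain ⟨hstart, hpos⟩ := hf1
    constructor
    · rw [fcStep_zero_eq] at hstart ⊢
      rw [← hstart]
      exact fcStep_init_lt f (Nat.succ_pos m)
    · have hsnoc : Fin.snoc (Fin.init f) (f (Fin.last (m+1))) = f := Fin.snoc_init_self f
      have hfl : f (Fin.last (m+1)) = b := by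
        rw [← hf2]; simp [fcStep, Fin.last]
      rw [hfl] at hsnoc
      have := fcPos_snoc_top (Fin.init f) b
      rw [hsnoc] at this
      rw [show fcPos f (m+1+1) = x from hpos] at this
      show fcPos (Fin.init f) (m+1) = x - (if b then 1 else -1)
      omega
  · intro g hg
    rw [mem_fcPaths] at hg
    obtain ⟨hstart, hpos⟩ := hg
    rw [Finset.mem_filter, mem_fcPaths]
    refine ⟨⟨?_, ?_⟩, fcStep_snoc_self g b⟩
    · rw [fcStep_zero_eq] at hstart ⊢
      rw [fcStep_snoc_lt g b (Nat.succ_pos m)]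
      exact hstart
    · rw [fcPos_snoc_top, hpos]; omega
  · intro f hf
    rw [Finset.mem_filter] at hf
    have hfl : f (Fin.last (m+1)) = b := by
      rw [← hf.2]; simp [fcStep, Fin.last]
    conv_rhs => rw [← Fin.snoc_init_self f]
    rw [hfl]
  · intro g _
    exact @Fin.init_snoc (m+1) (fun _ => Bool) b g
  · intro f hf
    rw [Finset.mem_filter] at hf
    have hfl : f (Fin.last (m+1)) = b := by
      rw [← hf.2]; simp [fcStep, Fin.last]
    congr 1
    conv_lhs => rw [← Fin.snoc_init_self f]
    rw [hfl]

lemma fcA_succ (c : ℝ) (m : ℕ) (x : ℤ) (b : Bool) :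
    fcA c (m+2) x b
      = fcA c (m+1) (x - (if b then 1 else -1)) b
        + (-Complex.I * (c : ℂ)) * fcA c (m+1) (x - (if b then 1 else -1)) (!b) := by
  unfold fcA
  rw [show (m+2-1) = m+1 from rfl, show (m+1-1) = m from rfl,
    sum_snoc m x b (fun f => (-Complex.I * (c : ℂ)) ^ fcTurns f)]
  set x' := x - (if b then 1 else -1)
  rw [← Finset.sum_filter_add_sum_filter_not (fcPaths (m+1) x') (fun g => fcStep g m = b)]
  congr 1
  · refine Finset.sum_congr rfl fun g hg => ?_
    rw [Finset.mem_filter] at hg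
    rw [fcTurns_snoc, if_pos hg.2, Nat.add_zero]
  · rw [Finset.mul_sum]
    rw [show ((fcPaths (m+1) x').filter fun g => ¬fcStep g m = b)
        = ((fcPaths (m+1) x').filter fun g => fcStep g m = !b) from
      Finset.filter_congr fun g _ => by cases b <;> cases hgb : fcStep g m <;> simp [hgb]]
    refine Finset.sum_congr rfl fun g hg => ?_
    rw [Finset.mem_filter] at hg
    rw [fcTurns_snoc, if_neg (by rw [hg.2]; cases b <;> simp), pow_succ]
    ring

lemma fcA_one_true (c : ℝ) (x : ℤ) :
    fcA c 1 x true = if x = 1 then 1 else 0 := by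
  unfold fcA
  by_cases hx : x = 1
  · subst hx
    rw [show ((fcPaths 1 1).filter fun f => fcStep f 0 = true) = {fun _ => true} from ?_]
    · simp [fcTurns]
    · ext f
      simp only [Finset.mem_filter, mem_fcPaths, Finset.mem_singleton]
      constructor
      · rintro ⟨⟨h1, _⟩, _⟩
        funext i
        have : i = ⟨0, Nat.one_pos⟩ := Subsingleton.elim _ _
        subst this
        exact h1 _ rfl
      · rintro rfl
        refine ⟨⟨fun i _ => rfl, ?_⟩, ?_⟩ <;> simp [fcPos, fcStep]
  · rw [show ((fcPaths 1 x).filter fun f => fcStep f 0 = true) = ∅ from ?_]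
    · simp [hx]
    · ext f
      simp only [Finset.mem_filter, mem_fcPaths, Finset.notMem_empty, iff_false, not_and]
      rintro ⟨h1, h2⟩
      exfalso
      apply hx
      rw [← h2]
      have h0 : f 0 = true := h1 0 rfl
      simp [fcPos, fcStep, h0]

lemma fcA_one_false (c : ℝ) (x : ℤ) : fcA c 1 x false = 0 := by
  unfold fcA
  rw [show ((fcPaths 1 x).filter fun f => fcStep f 0 = false) = ∅ from ?_]
  · simp
  · ext f
    simp only [Finset.mem_filter, mem_fcPaths, Finset.notMem_empty, iff_false, not_and]
    rintro ⟨h1, _⟩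
    have h0 : f 0 = true := h1 0 rfl
    simp [fcStep, h0]

lemma fcA_eq_pp (c : ℝ) : ∀ n, 1 ≤ n → ∀ x : ℤ,
    fcA c n x true = (((pp c n x).1 : ℝ) : ℂ)
      ∧ fcA c n x false = Complex.I * (((pp c n x).2 : ℝ) : ℂ) := by
  intro n hn
  induction n, hn using Nat.le_induction with
  | base =>
    intro x
    rw [fcA_one_true, fcA_one_false]
    constructor
    · simp only [pp]
      split <;> simp
    · simp [pp]
  | succ n hn ih =>
    intro x
    obtain ⟨m, rfl⟩ : ∃ m, n = m + 1 := ⟨n - 1, (Nat.succ_pred_eq_of_pos hn).symm⟩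
    constructor
    · rw [fcA_succ]
      simp only [if_pos, Bool.not_true]
      obtain ⟨h1, h2⟩ := ih (x - 1)
      rw [h1, h2]
      show _ = (((pp c (m+1+1) x).1 : ℝ) : ℂ)
      rw [show pp c (m+1+1) x = pp c (m+2) x from rfl]
      simp only [pp]
      push_cast
      linear_combination (-(c : ℂ) * ((pp c (m+1) (x-1)).2 : ℂ)) * Complex.I_sq
    · rw [fcA_succ]
      simp only [Bool.not_false]
      rw [show x - (if false then 1 else -1) = x + 1 by simp]
      obtain ⟨h1, h2⟩ := ih (x + 1)
      rw [h1, h2]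
      show _ = Complex.I * (((pp c (m+1+1) x).2 : ℝ) : ℂ)
      rw [show pp c (m+1+1) x = pp c (m+2) x from rfl]
      simp only [pp]
      push_cast
      ring

lemma fcAmp_re_im (m ε : ℝ) (x : ℤ) (n : ℕ) (hn : 1 ≤ n) :
    (fcAmp m ε x n).re
        = -((1 + (m*ε)^2) ^ ((1 - (n : ℝ)) / 2)) * (pp (m*ε) n x).2
      ∧ (fcAmp m ε x n).im
        = ((1 + (m*ε)^2) ^ ((1 - (n : ℝ)) / 2)) * (pp (m*ε) n x).1 := by
  have hbase : (1 + m ^ 2 * ε ^ 2 : ℝ) = 1 + (m*ε)^2 := by ring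
  have hsplit : (∑ f ∈ fcPaths n x, (-Complex.I * ((m:ℂ) * (ε:ℂ))) ^ fcTurns f)
      = fcA (m*ε) n x true + fcA (m*ε) n x false := by
    unfold fcA
    rw [← Finset.sum_filter_add_sum_filter_not (fcPaths n x) (fun f => fcStep f (n-1) = true)]
    congr 1
    · refine Finset.sum_congr rfl fun f _ => ?_; push_cast; ring_nf
    · rw [show ((fcPaths n x).filter fun f => ¬fcStep f (n-1) = true)
          = ((fcPaths n x).filter fun f => fcStep f (n-1) = false) from
        Finset.filter_congr fun f _ => by cases h : fcStep f (n-1) <;> simp [h]]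
      refine Finset.sum_congr rfl fun f _ => ?_; push_cast; ring_nf
  obtain ⟨h1, h2⟩ := fcA_eq_pp (m*ε) n hn x
  set R : ℝ := (1 + (m*ε)^2) ^ ((1 - (n : ℝ)) / 2) with hR
  have hamp : fcAmp m ε x n = (R : ℂ) * Complex.I
      * ((((pp (m*ε) n x).1 : ℝ) : ℂ) + Complex.I * (((pp (m*ε) n x).2 : ℝ) : ℂ)) := by
    unfold fcAmp
    rw [hbase, hsplit, h1, h2]
  rw [hamp]
  constructor <;>
    simp [Complex.mul_re, Complex.mul_im, Complex.add_re, Complex.add_im] <;> ring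

/-! ### The analytic identity -/

lemma R2_succ (c : ℝ) (n : ℕ) :
    (((1 + c^2 : ℝ)) ^ ((1 - ((n:ℝ)+1)) / 2))^2 * (1 + c^2)
      = (((1 + c^2 : ℝ)) ^ ((1 - (n:ℝ)) / 2))^2 := by
  have hb : (0:ℝ) < 1 + c^2 := by positivity
  have key : ∀ y : ℝ, ((1 + c^2 : ℝ) ^ y)^2 = (1 + c^2 : ℝ) ^ (2*y) := fun y => by
    rw [sq, ← Real.rpow_add hb]; ring_nf
  rw [key, key]
  nth_rewrite 2 [show (1 + c^2 : ℝ) = (1 + c^2 : ℝ) ^ (1:ℝ) from (Real.rpow_one _).symm]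
  rw [← Real.rpow_add hb]
  congr 1
  ring

lemma main_id (c : ℝ) : ∀ N : ℕ, 1 ≤ N →
    ∑' X : ℤ, (X : ℝ) * ((((1 + c^2 : ℝ)) ^ ((1 - (N:ℝ)) / 2))^2
        * ((pp c N X).1^2 + (pp c N X).2^2))
      = ∑ k ∈ Finset.Icc 1 N, ∑' X : ℤ,
          (((1 + c^2 : ℝ)) ^ ((1 - (k:ℝ)) / 2))^2 * ((pp c k X).1^2 - (pp c k X).2^2) := by
  intro N hN
  induction N, hN using Nat.le_induction with
  | base =>
    have h1 : ((1 - ((1:ℕ):ℝ)) / 2) = 0 := by norm_num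
    rw [h1]
    simp only [Real.rpow_zero, one_pow, one_mul, Finset.Icc_self, Finset.sum_singleton]
    rw [tsum_eq_single (1 : ℤ) ?_, tsum_eq_single (1 : ℤ) ?_]
    · simp [pp]
    · intro x hx; simp [pp, hx]
    · intro x hx; simp [pp, hx]
  | succ n hn ih =>
    obtain ⟨m, rfl⟩ : ∃ m, n = m + 1 := ⟨n - 1, (Nat.succ_pred_eq_of_pos hn).symm⟩
    set p : ℤ → ℝ := fun y => (pp c (m+1) y).1 with hp
    set q : ℤ → ℝ := fun y => (pp c (m+1) y).2 with hq
    set g : ℤ → ℝ := fun y => p y + c * q y with hg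
    set h : ℤ → ℝ := fun y => q y - c * p y with hh
    set A : ℝ := (((1 + c^2 : ℝ)) ^ ((1 - ((m+1+1:ℕ):ℝ)) / 2))^2 with hA
    set B : ℝ := (((1 + c^2 : ℝ)) ^ ((1 - ((m+1:ℕ):ℝ)) / 2))^2 with hB
    have hAB : A * (1 + c^2) = B := by
      rw [hA, hB]
      have := R2_succ c (m+1)
      push_cast at this ⊢
      convert this using 4 <;> push_cast <;> ring
    have hpp1 : ∀ X : ℤ, (pp c (m+1+1) X).1 = g (X - 1) := fun X => by
      show (pp c (m+2) X).1 = _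
      simp [pp, hg, hp, hq]
    have hpp2 : ∀ X : ℤ, (pp c (m+1+1) X).2 = h (X + 1) := fun X => by
      show (pp c (m+2) X).2 = _
      simp [pp, hh, hp, hq]
    have hzero : ∀ y : ℤ, pp c (m+1) y = 0 → g y = 0 ∧ h y = 0 := by
      intro y hy
      constructor <;> simp [hg, hh, hp, hq, hy]
    have hsumm : ∀ F : ℤ → ℝ, (∀ y, pp c (m+1) y = 0 → F y = 0) → Summable F :=
      fun F hF => summable_pp_aux c (m+1) F hF
    -- summability facts
    have sg1 : Summable (fun Y : ℤ => (Y:ℝ) * (A * g Y ^ 2)) :=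
      hsumm _ fun y hy => by rw [(hzero y hy).1]; ring
    have sg2 : Summable (fun Y : ℤ => A * g Y ^ 2) :=
      hsumm _ fun y hy => by rw [(hzero y hy).1]; ring
    have sh1 : Summable (fun Y : ℤ => (Y:ℝ) * (A * h Y ^ 2)) :=
      hsumm _ fun y hy => by rw [(hzero y hy).2]; ring
    have sh2 : Summable (fun Y : ℤ => A * h Y ^ 2) :=
      hsumm _ fun y hy => by rw [(hzero y hy).2]; ring
    have sG : Summable (fun X : ℤ => (X:ℝ) * (A * g (X-1) ^ 2)) := by
      apply summable_of_ne_finset_zero (s := Finset.Icc (-(m+2):ℤ) (m+2))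
      intro x hx
      simp only [Finset.mem_Icc, not_and_or, not_le] at hx
      have : pp c (m+1) (x-1) = 0 := by
        apply pp_supp; rw [lt_abs]; push_cast; omega
      rw [(hzero _ this).1]; ring
    have sH : Summable (fun X : ℤ => (X:ℝ) * (A * h (X+1) ^ 2)) := by
      apply summable_of_ne_finset_zero (s := Finset.Icc (-(m+2):ℤ) (m+2))
      intro x hx
      simp only [Finset.mem_Icc, not_and_or, not_le] at hx
      have : pp c (m+1) (x+1) = 0 := by
        apply pp_supp; rw [lt_abs]; push_cast; omega
      rw [(hzero _ this).2]; ring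
    -- shift identities
    have shiftg : ∑' X : ℤ, (X:ℝ) * (A * g (X-1) ^ 2)
        = ∑' Y : ℤ, ((Y:ℝ) + 1) * (A * g Y ^ 2) := by
      rw [← (Equiv.addRight (1:ℤ)).tsum_eq (fun X : ℤ => (X:ℝ) * (A * g (X-1) ^ 2))]
      refine tsum_congr fun Y => ?_
      simp only [Equiv.coe_addRight, add_sub_cancel_right]
      push_cast; ring
    have shifth : ∑' X : ℤ, (X:ℝ) * (A * h (X+1) ^ 2)
        = ∑' Y : ℤ, ((Y:ℝ) - 1) * (A * h Y ^ 2) := by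
      rw [← (Equiv.subRight (1:ℤ)).tsum_eq (fun X : ℤ => (X:ℝ) * (A * h (X+1) ^ 2))]
      refine tsum_congr fun Y => ?_
      simp only [Equiv.subRight_apply, sub_add_cancel]
      push_cast; ring
    have shiftg2 : ∑' X : ℤ, A * g (X-1) ^ 2 = ∑' Y : ℤ, A * g Y ^ 2 := by
      rw [← (Equiv.addRight (1:ℤ)).tsum_eq (fun X : ℤ => A * g (X-1) ^ 2)]
      exact tsum_congr fun Y => by simp
    have shifth2 : ∑' X : ℤ, A * h (X+1) ^ 2 = ∑' Y : ℤ, A * h Y ^ 2 := by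
      rw [← (Equiv.subRight (1:ℤ)).tsum_eq (fun X : ℤ => A * h (X+1) ^ 2)]
      exact tsum_congr fun Y => by simp
    -- the (m+2)-th instantaneous term
    have hterm : ∑' X : ℤ, A * ((pp c (m+1+1) X).1^2 - (pp c (m+1+1) X).2^2)
        = ∑' Y : ℤ, A * g Y ^ 2 - ∑' Y : ℤ, A * h Y ^ 2 := by
      have sG2 : Summable (fun X : ℤ => A * g (X-1) ^ 2) := by
        apply summable_of_ne_finset_zero (s := Finset.Icc (-(m+2):ℤ) (m+2))
        intro x hx
        simp only [Finset.mem_Icc, not_and_or, not_le] at hx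
        have : pp c (m+1) (x-1) = 0 := by
          apply pp_supp; rw [lt_abs]; push_cast; omega
        rw [(hzero _ this).1]; ring
      have sH2 : Summable (fun X : ℤ => A * h (X+1) ^ 2) := by
        apply summable_of_ne_finset_zero (s := Finset.Icc (-(m+2):ℤ) (m+2))
        intro x hx
        simp only [Finset.mem_Icc, not_and_or, not_le] at hx
        have : pp c (m+1) (x+1) = 0 := by
          apply pp_supp; rw [lt_abs]; push_cast; omega
        rw [(hzero _ this).2]; ring
      calc ∑' X : ℤ, A * ((pp c (m+1+1) X).1^2 - (pp c (m+1+1) X).2^2)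
          = ∑' X : ℤ, (A * g (X-1) ^ 2 - A * h (X+1) ^ 2) := by
            refine tsum_congr fun X => ?_
            rw [hpp1, hpp2]; ring
        _ = ∑' X : ℤ, A * g (X-1) ^ 2 - ∑' X : ℤ, A * h (X+1) ^ 2 := Summable.tsum_sub sG2 sH2
        _ = ∑' Y : ℤ, A * g Y ^ 2 - ∑' Y : ℤ, A * h Y ^ 2 := by rw [shiftg2, shifth2]
    -- main computation
    have hmain : ∑' X : ℤ, (X : ℝ) * (A * ((pp c (m+1+1) X).1^2 + (pp c (m+1+1) X).2^2))
        = (∑' Y : ℤ, (Y:ℝ) * (B * (p Y ^ 2 + q Y ^ 2)))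
          + (∑' Y : ℤ, A * g Y ^ 2 - ∑' Y : ℤ, A * h Y ^ 2) := by
      calc ∑' X : ℤ, (X : ℝ) * (A * ((pp c (m+1+1) X).1^2 + (pp c (m+1+1) X).2^2))
          = ∑' X : ℤ, ((X:ℝ) * (A * g (X-1) ^ 2) + (X:ℝ) * (A * h (X+1) ^ 2)) := by
            refine tsum_congr fun X => ?_
            rw [hpp1, hpp2]; ring
        _ = ∑' X : ℤ, (X:ℝ) * (A * g (X-1) ^ 2) + ∑' X : ℤ, (X:ℝ) * (A * h (X+1) ^ 2) :=
            Summable.tsum_add sG sH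
        _ = ∑' Y : ℤ, ((Y:ℝ) + 1) * (A * g Y ^ 2) + ∑' Y : ℤ, ((Y:ℝ) - 1) * (A * h Y ^ 2) := by
            rw [shiftg, shifth]
        _ = (∑' Y : ℤ, ((Y:ℝ) * (A * g Y ^ 2) + A * g Y ^ 2))
            + ∑' Y : ℤ, ((Y:ℝ) * (A * h Y ^ 2) - A * h Y ^ 2) := by
            congr 1 <;> exact tsum_congr fun Y => by ring
        _ = ((∑' Y : ℤ, (Y:ℝ) * (A * g Y ^ 2)) + ∑' Y : ℤ, A * g Y ^ 2)
            + ((∑' Y : ℤ, (Y:ℝ) * (A * h Y ^ 2)) - ∑' Y : ℤ, A * h Y ^ 2) := by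
            rw [Summable.tsum_add sg1 sg2, Summable.tsum_sub sh1 sh2]
        _ = ((∑' Y : ℤ, (Y:ℝ) * (A * g Y ^ 2)) + ∑' Y : ℤ, (Y:ℝ) * (A * h Y ^ 2))
            + (∑' Y : ℤ, A * g Y ^ 2 - ∑' Y : ℤ, A * h Y ^ 2) := by ring
        _ = (∑' Y : ℤ, ((Y:ℝ) * (A * g Y ^ 2) + (Y:ℝ) * (A * h Y ^ 2)))
            + (∑' Y : ℤ, A * g Y ^ 2 - ∑' Y : ℤ, A * h Y ^ 2) := by
            rw [Summable.tsum_add sg1 sh1]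
        _ = (∑' Y : ℤ, (Y:ℝ) * (B * (p Y ^ 2 + q Y ^ 2)))
            + (∑' Y : ℤ, A * g Y ^ 2 - ∑' Y : ℤ, A * h Y ^ 2) := by
            congr 1
            refine tsum_congr fun Y => ?_
            rw [← hAB]
            simp only [hg, hh]
            ring
    rw [Finset.sum_Icc_succ_top (by omega : 1 ≤ m + 1 + 1), ← ih, ← hterm] at *
    rw [hmain]

/-! ### Main theorem -/

/-- The expectation of the average electron velocity equals the time-average of the
expectations of the instantaneous electron velocity. -/
theorem stmt1 (m ε : ℝ) (hε : 0 < ε) (hm : 0 ≤ m) (T : ℝ) (N : ℕ) (hN : 0 < N)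
    (hT : T = ε * N) :
    ∑' X : ℤ, (ε * (X : ℝ) / T) * ((fcAmp m ε X N).re ^ 2 + (fcAmp m ε X N).im ^ 2)
      = (ε / T) * ∑ k ∈ Finset.Icc 1 N,
          ∑' X : ℤ, ((fcAmp m ε X k).im ^ 2 - (fcAmp m ε X k).re ^ 2) := by
  set c : ℝ := m * ε with hc
  have hL : ∑' X : ℤ, (ε * (X : ℝ) / T) * ((fcAmp m ε X N).re ^ 2 + (fcAmp m ε X N).im ^ 2)
      = (ε / T) * ∑' X : ℤ, (X : ℝ) * ((((1 + c^2 : ℝ)) ^ ((1 - (N:ℝ)) / 2))^2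
          * ((pp c N X).1^2 + (pp c N X).2^2)) := by
    rw [← tsum_mul_left]
    refine tsum_congr fun X => ?_
    obtain ⟨h1, h2⟩ := fcAmp_re_im m ε X N hN
    rw [h1, h2]
    ring
  have hR : ∀ k ∈ Finset.Icc 1 N,
      ∑' X : ℤ, ((fcAmp m ε X k).im ^ 2 - (fcAmp m ε X k).re ^ 2)
        = ∑' X : ℤ, (((1 + c^2 : ℝ)) ^ ((1 - (k:ℝ)) / 2))^2
            * ((pp c k X).1^2 - (pp c k X).2^2) := by
    intro k hk
    have hk1 : 1 ≤ k := (Finset.mem_Icc.mp hk).1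
    refine tsum_congr fun X => ?_
    obtain ⟨h1, h2⟩ := fcAmp_re_im m ε X k hk1
    rw [h1, h2]
    ring
  rw [hL, Finset.sum_congr rfl hR, main_id c N hN]
end
end

section
/- There is a constant C > 0 such that for every ε > 0 and every T ∈ εℤ₊, taking mass m = 1/ε, we have |Σ_{x∈εℤ} (x/T)·(a₁(x,T,1/ε,ε)² + a₂(x,T,1/ε,ε)²) − (1 − 1/√2)| ≤ C·ε/T. -/
noncomputable section

namespace FC
-- [assume section 1 pasted above; for testing, re-include]
def chkr : ℕ → ℤ → ℝ × ℝ
  | 0, x => (if x = 1 then 1 else 0, 0)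
  | n+1, x => ((chkr n (x-1)).1 - (chkr n (x-1)).2, (chkr n (x+1)).1 + (chkr n (x+1)).2)
def U (n : ℕ) (x : ℤ) : ℝ := (chkr n x).1
def V (n : ℕ) (x : ℤ) : ℝ := (chkr n x).2
lemma U_zero (x : ℤ) : U 0 x = if x = 1 then 1 else 0 := rfl
lemma V_zero (x : ℤ) : V 0 x = 0 := rfl
lemma U_succ (n : ℕ) (x : ℤ) : U (n+1) x = U n (x-1) - V n (x-1) := rfl
lemma V_succ (n : ℕ) (x : ℤ) : V (n+1) x = U n (x+1) + V n (x+1) := rfl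
lemma supp : ∀ (n : ℕ) (x : ℤ),
    (((n:ℤ)+1 < x ∨ x < -(n:ℤ)+1) → U n x = 0) ∧
    (((n:ℤ) ≤ x ∨ x ≤ -(n:ℤ)) → V n x = 0) := by
  intro n
  induction n with
  | zero =>
    intro x
    refine ⟨fun hx => by rw [U_zero, if_neg]; omega, fun _ => rfl⟩
  | succ n ih =>
    intro x
    push_cast
    refine ⟨fun hx => ?_, fun hx => ?_⟩
    · rw [U_succ, ((ih (x-1)).1 (by omega)), ((ih (x-1)).2 (by omega)), sub_zero]
    · rw [V_succ, ((ih (x+1)).1 (by omega)), ((ih (x+1)).2 (by omega)), add_zero]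
lemma U_supp {n : ℕ} {x : ℤ} (h : (n:ℤ)+1 < x ∨ x < -(n:ℤ)+1) : U n x = 0 := (supp n x).1 h
lemma V_supp {n : ℕ} {x : ℤ} (h : (n:ℤ) ≤ x ∨ x ≤ -(n:ℤ)) : V n x = 0 := (supp n x).2 h
lemma summable_box {f : ℤ → ℝ} {R : ℤ} (h : ∀ x, R < x ∨ x < -R → f x = 0) : Summable f := by
  apply summable_of_ne_finset_zero (s := Finset.Icc (-R) R)
  intro b hb
  simp only [Finset.mem_Icc, not_and_or, not_le] at hb
  exact h b (by omega)
lemma U_zero_out {n : ℕ} {x : ℤ} (h : (n:ℤ)+1 < x ∨ x < -((n:ℤ)+1)) : U n x = 0 :=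
  U_supp (by omega)
lemma V_zero_out {n : ℕ} {x : ℤ} (h : (n:ℤ)+1 < x ∨ x < -((n:ℤ)+1)) : V n x = 0 :=
  V_supp (by omega)
-- end of section 1

lemma tsum_shift (f : ℤ → ℝ) (c : ℤ) : ∑' x : ℤ, f (x + c) = ∑' x : ℤ, f x :=
  (Equiv.addRight c).tsum_eq f

lemma tsum_shift' (f : ℤ → ℝ) (c : ℤ) : ∑' x : ℤ, f (x - c) = ∑' x : ℤ, f x :=
  (Equiv.subRight c).tsum_eq f

def Pn (n : ℕ) : ℝ := ∑' x : ℤ, (U n x^2 + V n x^2)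
def Bn (n : ℕ) : ℝ := ∑' x : ℤ, V n x^2
def Dn (n : ℕ) : ℝ := ∑' x : ℤ, U n x * V n x
def Mn (n : ℕ) : ℝ := ∑' x : ℤ, (x:ℝ) * (U n x^2 + V n x^2)

-- summability workhorses
lemma summable_UV (n : ℕ) (g : ℝ → ℝ → ℝ) (h0 : g 0 0 = 0) (c : ℤ) :
    Summable (fun x : ℤ => g (U n (x+c)) (V n (x+c))) := by
  apply summable_box (R := (n:ℤ) + 2 + |c|)
  intro x hx
  rcases abs_cases c with ⟨h1, _⟩ | ⟨h1, _⟩ <;>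
    rw [U_zero_out (by omega), V_zero_out (by omega)] <;> exact h0

lemma summable_UV' (n : ℕ) (g : ℝ → ℝ → ℝ) (h0 : g 0 0 = 0) :
    Summable (fun x : ℤ => g (U n x) (V n x)) := by
  have := summable_UV n g h0 0
  simpa using this

lemma summable_xUV (n : ℕ) (g : ℝ → ℝ → ℝ) (h0 : ∀ t, t * g 0 0 = 0) (c d : ℤ) :
    Summable (fun x : ℤ => ((x:ℝ)+d) * g (U n (x+c)) (V n (x+c))) := by
  apply summable_box (R := (n:ℤ) + 2 + |c|)
  intro x hx
  rcases abs_cases c with ⟨h1, _⟩ | ⟨h1, _⟩ <;>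
    rw [U_zero_out (by omega), V_zero_out (by omega)] <;> exact h0 _

lemma Pn_succ (n : ℕ) : Pn (n+1) = 2 * Pn n := by
  have s1 : Summable (fun y : ℤ => (U n y - V n y)^2) := summable_UV' n (fun u v => (u-v)^2) (by norm_num)
  have s2 : Summable (fun y : ℤ => (U n y + V n y)^2) := summable_UV' n (fun u v => (u+v)^2) (by norm_num)
  have s1' : Summable (fun x : ℤ => (U n (x - 1) - V n (x - 1))^2) := by
    have := summable_UV n (fun u v => (u-v)^2) (by norm_num) (-1)
    simpa [sub_eq_add_neg] using this
  have s2' : Summable (fun x : ℤ => (U n (x + 1) + V n (x + 1))^2) := summable_UV n (fun u v => (u+v)^2) (by norm_num) 1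
  calc Pn (n+1) = ∑' x:ℤ, ((U n (x - 1) - V n (x - 1))^2 + (U n (x+1) + V n (x+1))^2) := by
        simp only [Pn, U_succ, V_succ]
    _ = (∑' x:ℤ, (U n (x - 1) - V n (x - 1))^2) + ∑' x:ℤ, (U n (x+1) + V n (x+1))^2 :=
        Summable.tsum_add s1' s2'
    _ = (∑' y:ℤ, (U n y - V n y)^2) + ∑' y:ℤ, (U n y + V n y)^2 := by
        rw [tsum_shift' (fun y => (U n y - V n y)^2) 1, tsum_shift (fun y => (U n y + V n y)^2) 1]
    _ = ∑' y:ℤ, ((U n y - V n y)^2 + (U n y + V n y)^2) := (Summable.tsum_add s1 s2).symm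
    _ = ∑' y:ℤ, 2*(U n y^2 + V n y^2) := by congr 1; funext y; ring
    _ = 2 * Pn n := by rw [Pn, ← tsum_mul_left]

lemma Pn_eq (n : ℕ) : Pn n = 2^n := by
  induction n with
  | zero =>
    have : ∀ x : ℤ, (U 0 x^2 + V 0 x^2) = if x = 1 then 1 else 0 := by
      intro x
      rw [U_zero, V_zero]
      split <;> norm_num
    rw [Pn]
    simp only [this]
    rw [tsum_eq_single (1:ℤ) (fun b hb => by rw [if_neg hb])]
    norm_num
  | succ n ih => rw [Pn_succ, ih]; ring

lemma Bn_succ_eq (n : ℕ) : Bn (n+1) = Pn n + 2 * Dn n := by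
  have s1 : Summable (fun y : ℤ => (U n y + V n y)^2) := summable_UV' n (fun u v => (u+v)^2) (by norm_num)
  have sP : Summable (fun y : ℤ => U n y^2 + V n y^2) := summable_UV' n (fun u v => u^2+v^2) (by norm_num)
  have sD : Summable (fun y : ℤ => 2*(U n y * V n y)) := summable_UV' n (fun u v => 2*(u*v)) (by norm_num)
  calc Bn (n+1) = ∑' x:ℤ, (U n (x+1) + V n (x+1))^2 := by simp only [Bn, V_succ]
    _ = ∑' y:ℤ, (U n y + V n y)^2 := tsum_shift (fun y => (U n y + V n y)^2) 1
    _ = ∑' y:ℤ, ((U n y^2 + V n y^2) + 2*(U n y * V n y)) := by congr 1; funext y; ring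
    _ = Pn n + 2 * Dn n := by
        rw [Summable.tsum_add sP sD, Pn, Dn, ← tsum_mul_left]

lemma Mn_succ (n : ℕ) : Mn (n+1) = 2 * Mn n - 4 * Dn n := by
  have t1 : Summable (fun x : ℤ => ((x:ℝ)+1) * (U n x - V n x)^2) := by
    have := summable_xUV n (fun u v => (u-v)^2) (by norm_num) 0 1
    simpa using this
  have t2 : Summable (fun x : ℤ => ((x:ℝ)-1) * (U n x + V n x)^2) := by
    have := summable_xUV n (fun u v => (u+v)^2) (by norm_num) 0 (-1)
    simpa [sub_eq_add_neg] using this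
  have t1' : Summable (fun x : ℤ => ((x:ℝ)) * (U n (x - 1) - V n (x - 1))^2) := by
    have := summable_xUV n (fun u v => (u-v)^2) (by norm_num) (-1) 0
    simpa [sub_eq_add_neg] using this
  have t2' : Summable (fun x : ℤ => ((x:ℝ)) * (U n (x + 1) + V n (x + 1))^2) := by
    have := summable_xUV n (fun u v => (u+v)^2) (by norm_num) 1 0
    simpa using this
  have sM : Summable (fun y : ℤ => 2*((y:ℝ) * (U n y^2 + V n y^2))) :=
    (summable_xUV n (fun u v => u^2+v^2) (by norm_num) 0 0).mul_left 2 |>.congr (by intro y; push_cast; ring)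
  have sD : Summable (fun y : ℤ => 4*(U n y * V n y)) := summable_UV' n (fun u v => 4*(u*v)) (by norm_num)
  have shift1 : (∑' x:ℤ, ((x:ℝ)) * (U n (x - 1) - V n (x - 1))^2)
      = ∑' y:ℤ, ((y:ℝ)+1) * (U n y - V n y)^2 := by
    have := tsum_shift' (fun y : ℤ => ((y:ℝ)+1) * (U n y - V n y)^2) 1
    rw [← this]
    congr 1; funext x; push_cast; ring_nf
  have shift2 : (∑' x:ℤ, ((x:ℝ)) * (U n (x + 1) + V n (x + 1))^2)
      = ∑' y:ℤ, ((y:ℝ)-1) * (U n y + V n y)^2 := by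
    have := tsum_shift (fun y : ℤ => ((y:ℝ)-1) * (U n y + V n y)^2) 1
    rw [← this]
    congr 1; funext x; push_cast; ring_nf
  calc Mn (n+1) = ∑' x:ℤ, ((x:ℝ) * (U n (x - 1) - V n (x - 1))^2 + (x:ℝ) * (U n (x+1) + V n (x+1))^2) := by
        simp only [Mn, U_succ, V_succ]
        congr 1; funext x; ring
    _ = (∑' x:ℤ, (x:ℝ) * (U n (x - 1) - V n (x - 1))^2) + ∑' x:ℤ, (x:ℝ) * (U n (x+1) + V n (x+1))^2 :=
        Summable.tsum_add t1' t2'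
    _ = (∑' y:ℤ, ((y:ℝ)+1) * (U n y - V n y)^2) + ∑' y:ℤ, ((y:ℝ)-1) * (U n y + V n y)^2 := by
        rw [shift1, shift2]
    _ = ∑' y:ℤ, (((y:ℝ)+1) * (U n y - V n y)^2 + ((y:ℝ)-1) * (U n y + V n y)^2) := (Summable.tsum_add t1 t2).symm
    _ = ∑' y:ℤ, (2*((y:ℝ) * (U n y^2 + V n y^2)) - 4*(U n y * V n y)) := by congr 1; funext y; ring
    _ = 2 * Mn n - 4 * Dn n := by
        rw [Summable.tsum_sub sM sD, Mn, Dn, ← tsum_mul_left, ← tsum_mul_left]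

lemma CR : ∀ (b a : ℕ) (y : ℤ), V (a+b+1) y =
    ∑' x : ℤ, (U a x * (U b (x-y) + V b (x-y)) + V a x * (U b (x-y) - V b (x-y))) := by
  intro b
  induction b with
  | zero =>
    intro a y
    rw [tsum_eq_single (y+1) ?_]
    · have h1 : U 0 (y+1-y) = 1 := by rw [U_zero, if_pos (by omega)]
      rw [h1, V_zero, V_succ]
      ring
    · intro x hx
      rw [U_zero, V_zero, if_neg (by omega)]
      ring
  | succ b ih =>
    intro a y
    have key : (∑' x : ℤ, (U a x * (U (b+1) (x-y) + V (b+1) (x-y)) + V a x * (U (b+1) (x-y) - V (b+1) (x-y))))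
        = ∑' x : ℤ, (U (a+1) x * (U b (x-y) + V b (x-y)) + V (a+1) x * (U b (x-y) - V b (x-y))) := by
      have sA : Summable (fun x : ℤ => (U a x + V a x) * (U b (x-y-1) - V b (x-y-1))) := by
        apply summable_box (R := (a:ℤ) + 2)
        intro x hx
        rw [U_zero_out (by omega), V_zero_out (by omega)]
        ring
      have sB : Summable (fun x : ℤ => (U a x - V a x) * (U b (x-y+1) + V b (x-y+1))) := by
        apply summable_box (R := (a:ℤ) + 2)
        intro x hx
        rw [U_zero_out (n := a) (by omega), V_zero_out (n := a) (by omega)]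
        ring
      calc (∑' x : ℤ, (U a x * (U (b+1) (x-y) + V (b+1) (x-y)) + V a x * (U (b+1) (x-y) - V (b+1) (x-y))))
          = ∑' x : ℤ, ((U a x + V a x) * (U b (x-y-1) - V b (x-y-1))
              + (U a x - V a x) * (U b (x-y+1) + V b (x-y+1))) := by
            congr 1; funext x
            rw [U_succ, V_succ]
            ring
        _ = (∑' x : ℤ, (U a x + V a x) * (U b (x-y-1) - V b (x-y-1)))
              + ∑' x : ℤ, (U a x - V a x) * (U b (x-y+1) + V b (x-y+1)) := Summable.tsum_add sA sB
        _ = (∑' x : ℤ, (U a (x+1) + V a (x+1)) * (U b (x-y) - V b (x-y)))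
              + ∑' x : ℤ, (U a (x-1) - V a (x-1)) * (U b (x-y) + V b (x-y)) := by
            rw [← tsum_shift (fun x => (U a x + V a x) * (U b (x-y-1) - V b (x-y-1))) 1,
                ← tsum_shift' (fun x => (U a x - V a x) * (U b (x-y+1) + V b (x-y+1))) 1]
            congr 1 <;> (congr 1; funext x; congr 2 <;> ring_nf)
        _ = (∑' x : ℤ, V (a+1) x * (U b (x-y) - V b (x-y)))
              + ∑' x : ℤ, U (a+1) x * (U b (x-y) + V b (x-y)) := by
            simp only [U_succ, V_succ]
        _ = ∑' x : ℤ, (U (a+1) x * (U b (x-y) + V b (x-y)) + V (a+1) x * (U b (x-y) - V b (x-y))) := by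
            rw [add_comm]
            refine (Summable.tsum_add ?_ ?_).symm
            · apply summable_box (R := (a:ℤ) + 3)
              intro x hx
              rw [U_zero_out (n := a+1) (by push_cast; omega)]
              ring
            · apply summable_box (R := (a:ℤ) + 3)
              intro x hx
              rw [V_zero_out (n := a+1) (by push_cast; omega)]
              ring
    rw [key, ← ih (a+1) y]
    congr 1
    omega

lemma g4 (n : ℕ) : V (2*n+1) 0 = Pn n - 2 * Bn n + 2 * Dn n := by
  have h := CR n n 0
  simp only [sub_zero] at h
  have e : 2*n+1 = n+n+1 := by omega
  rw [e, h]
  have sP : Summable (fun y : ℤ => U n y^2 + V n y^2) := summable_UV' n (fun u v => u^2+v^2) (by norm_num)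
  have sB : Summable (fun y : ℤ => 2 * V n y^2) := summable_UV' n (fun u v => 2*v^2) (by norm_num)
  have sD : Summable (fun y : ℤ => 2 * (U n y * V n y)) := summable_UV' n (fun u v => 2*(u*v)) (by norm_num)
  calc (∑' x : ℤ, (U n x * (U n x + V n x) + V n x * (U n x - V n x)))
      = ∑' x : ℤ, ((U n x^2 + V n x^2) - 2 * V n x^2 + 2 * (U n x * V n x)) := by
        congr 1; funext x; ring
    _ = Pn n - 2 * Bn n + 2 * Dn n := by
        rw [Summable.tsum_add (Summable.sub sP sB) sD, Summable.tsum_sub sP sB, Pn, Bn, Dn, ← tsum_mul_left, ← tsum_mul_left]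

/-! ### Closed form for the V-column -/

def Kc (a b : ℕ) : ℝ := ∑ r ∈ Finset.range (b+1), (-1:ℝ)^r * (a.choose r) * (b.choose r)
def Lc (a b : ℕ) : ℝ := ∑ r ∈ Finset.range (b+1), (-1:ℝ)^r * (a.choose r) * (b.choose (r+1))

lemma Kc_a0 (a : ℕ) : Kc a 0 = 1 := by simp [Kc]

lemma Kc_0b (b : ℕ) : Kc 0 b = 1 := by
  rw [Kc, Finset.sum_eq_single 0]
  · simp
  · intro r _ hr
    rcases Nat.exists_eq_succ_of_ne_zero hr with ⟨k, rfl⟩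
    simp [Nat.choose_succ_succ]
  · simp

lemma Kc_succ_left (a b : ℕ) : Kc (a+1) b = Kc a b - Lc a b := by
  have hL : Lc a b = ∑ i ∈ Finset.range b, (-1:ℝ)^i * (a.choose i) * (b.choose (i+1)) := by
    rw [Lc, Finset.sum_range_succ, Nat.choose_succ_self]
    simp
  have hK1 : Kc (a+1) b
      = (∑ i ∈ Finset.range b, ((-1:ℝ)^(i+1) * (a.choose (i+1)) * (b.choose (i+1))
          - (-1:ℝ)^i * (a.choose i) * (b.choose (i+1)))) + 1 := by
    rw [Kc, Finset.sum_range_succ']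
    congr 1
    · refine Finset.sum_congr rfl (fun i _ => ?_)
      rw [Nat.choose_succ_succ]
      push_cast
      ring
    · simp
  have hK2 : Kc a b
      = (∑ i ∈ Finset.range b, (-1:ℝ)^(i+1) * (a.choose (i+1)) * (b.choose (i+1))) + 1 := by
    rw [Kc, Finset.sum_range_succ']
    congr 1
    simp
  rw [hK1, hK2, hL, Finset.sum_sub_distrib]
  ring

lemma Lc_succ_right (a b : ℕ) : Lc a (b+1) = Lc a b + Kc a b := by
  have h1 : Lc a (b+1) = ∑ s ∈ Finset.range (b+2),
      ((-1:ℝ)^s * (a.choose s) * (b.choose s) + (-1:ℝ)^s * (a.choose s) * (b.choose (s+1))) := by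
    rw [Lc]
    refine Finset.sum_congr rfl (fun s _ => ?_)
    rw [Nat.choose_succ_succ b s]
    push_cast
    ring
  have hA : ∑ s ∈ Finset.range (b+2), (-1:ℝ)^s * (a.choose s) * (b.choose s) = Kc a b := by
    rw [Kc, Finset.sum_range_succ (n := b+1), Nat.choose_succ_self]
    simp
  have hB : ∑ s ∈ Finset.range (b+2), (-1:ℝ)^s * (a.choose s) * (b.choose (s+1)) = Lc a b := by
    rw [Lc, Finset.sum_range_succ (n := b+1), Nat.choose_eq_zero_of_lt (by omega : b < b+1+1)]
    simp
  rw [h1, Finset.sum_add_distrib, hA, hB]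
  ring

lemma KcId (a b : ℕ) : Kc (a+1) (b+1) = Kc a (b+1) + Kc (a+1) b - 2 * Kc a b := by
  have h1 := Kc_succ_left a (b+1)
  have h2 := Kc_succ_left a b
  have h3 := Lc_succ_right a b
  linarith

lemma KG (m : ℕ) (x : ℤ) : V (m+2) x = V (m+1) (x-1) + V (m+1) (x+1) - 2 * V m x := by
  have h1 : V (m+2) x = U (m+1) (x+1) + V (m+1) (x+1) := V_succ _ _
  have h2 : U (m+1) (x+1) = U m x - V m x := by
    rw [U_succ, add_sub_cancel_right]
  have h3 : V (m+1) (x-1) = U m x + V m x := by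
    rw [V_succ, sub_add_cancel]
  linarith

lemma V_one (x : ℤ) : V 1 x = if x = 0 then 1 else 0 := by
  rw [show (1:ℕ) = 0+1 from rfl, V_succ, U_zero, V_zero, add_zero]
  by_cases h : x = 0
  · rw [if_pos (by omega : x + 1 = 1), if_pos h]
  · rw [if_neg (by omega : ¬(x + 1 = 1)), if_neg h]

lemma U_one (x : ℤ) : U 1 x = if x = 2 then 1 else 0 := by
  rw [show (1:ℕ) = 0+1 from rfl, U_succ, U_zero, V_zero, sub_zero]
  by_cases h : x = 2
  · rw [if_pos (by omega : x - 1 = 1), if_pos h]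
  · rw [if_neg (by omega : ¬(x - 1 = 1)), if_neg h]

lemma V_two (x : ℤ) : V 2 x = (if x = 1 then 1 else 0) + (if x = -1 then 1 else 0) := by
  rw [show (2:ℕ) = 1+1 from rfl, V_succ, U_one, V_one]
  by_cases h : x = 1
  · rw [if_pos (by omega : x + 1 = 2), if_neg (by omega : ¬(x+1 = 0)), if_pos h,
        if_neg (by omega : ¬(x = -1))]
  · rw [if_neg (by omega : ¬(x + 1 = 2)), if_neg h]
    by_cases h2 : x = -1
    · rw [if_pos (by omega : x + 1 = 0), if_pos h2]
    · rw [if_neg (by omega : ¬(x + 1 = 0)), if_neg h2]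

lemma V_closed : ∀ s : ℕ, ∀ a b : ℕ, a + b = s → V (s+1) ((a:ℤ) - b) = Kc a b := by
  intro s
  induction s using Nat.twoStepInduction with
  | zero =>
    intro a b hab
    obtain ⟨rfl, rfl⟩ : a = 0 ∧ b = 0 := by omega
    rw [show ((0:ℕ):ℤ) - ((0:ℕ):ℤ) = 0 by norm_num, Kc_a0, show (0:ℕ)+1 = 1 from rfl, V_one]
    norm_num
  | one =>
    intro a b hab
    rcases (by omega : a = 1 ∧ b = 0 ∨ a = 0 ∧ b = 1) with ⟨ha, hb⟩ | ⟨ha, hb⟩ <;> subst ha <;> subst hb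
    · rw [show ((1:ℕ):ℤ) - ((0:ℕ):ℤ) = 1 by norm_num, Kc_a0, show (1:ℕ)+1 = 2 from rfl, V_two]
      norm_num
    · rw [show ((0:ℕ):ℤ) - ((1:ℕ):ℤ) = -1 by norm_num, Kc_0b, show (1:ℕ)+1 = 2 from rfl, V_two]
      norm_num
  | more s ihs ihs1 =>
    intro a b hab
    have hKG := KG (s+1) ((a:ℤ) - b)
    rw [show s+1+2 = s+2+1 by omega] at hKG
    rw [hKG]
    rcases Nat.eq_zero_or_pos b with hb | hb
    · subst hb
      have ha : a = s + 2 := by omega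
      subst ha
      have e1 : ((s+2:ℕ):ℤ) - ((0:ℕ):ℤ) - 1 = ((s+1:ℕ):ℤ) - ((0:ℕ):ℤ) := by push_cast; ring
      have e2 : V (s+1+1) (((s+2:ℕ):ℤ) - ((0:ℕ):ℤ) + 1) = 0 := by
        apply V_supp
        left; push_cast; omega
      have e3 : V (s+1) (((s+2:ℕ):ℤ) - ((0:ℕ):ℤ)) = 0 := by
        apply V_supp
        left; push_cast; omega
      rw [e1, ihs1 (s+1) 0 (by omega), e2, e3, Kc_a0, Kc_a0]
      ring
    · rcases Nat.eq_zero_or_pos a with ha | ha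
      · subst ha
        have hbb : b = s + 2 := by omega
        subst hbb
        have e1 : ((0:ℕ):ℤ) - ((s+2:ℕ):ℤ) + 1 = ((0:ℕ):ℤ) - ((s+1:ℕ):ℤ) := by push_cast; ring
        have e2 : V (s+1+1) (((0:ℕ):ℤ) - ((s+2:ℕ):ℤ) - 1) = 0 := by
          apply V_supp
          right; push_cast; omega
        have e3 : V (s+1) (((0:ℕ):ℤ) - ((s+2:ℕ):ℤ)) = 0 := by
          apply V_supp
          right; push_cast; omega
        rw [e1, ihs1 0 (s+1) (by omega), e2, e3, Kc_0b, Kc_0b]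
        ring
      · obtain ⟨a', rfl⟩ := Nat.exists_eq_succ_of_ne_zero (by omega : a ≠ 0)
        obtain ⟨b', rfl⟩ := Nat.exists_eq_succ_of_ne_zero (by omega : b ≠ 0)
        have e1 : ((a'+1:ℕ):ℤ) - ((b'+1:ℕ):ℤ) - 1 = ((a':ℕ):ℤ) - ((b'+1:ℕ):ℤ) := by push_cast; ring
        have e2 : ((a'+1:ℕ):ℤ) - ((b'+1:ℕ):ℤ) + 1 = ((a'+1:ℕ):ℤ) - ((b':ℕ):ℤ) := by push_cast; ring
        have e3 : ((a'+1:ℕ):ℤ) - ((b'+1:ℕ):ℤ) = ((a':ℕ):ℤ) - ((b':ℕ):ℤ) := by push_cast; ring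
        rw [e1, e2, ihs1 a' (b'+1) (by omega), ihs1 (a'+1) b' (by omega), e3,
            ihs a' b' (by omega), KcId]

lemma Vcenter (n : ℕ) : V (2*n+1) 0 = Kc n n := by
  have h := V_closed (2*n) n n (by omega)
  rwa [show ((n:ℤ) - ((n:ℕ):ℤ) = 0) by ring] at h


open Real intervalIntegral

/-- the Wallis-type integrals with the `1/(1+sin²)` weight -/
def Jk (k : ℕ) : ℝ := ∫ x in (0:ℝ)..π, sin x ^ (2*k) / (1 + sin x ^ 2)

def bseq (k : ℕ) : ℝ := (Nat.centralBinom k : ℝ) / 4^k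

lemma one_add_sin_sq_pos (x : ℝ) : 0 < 1 + sin x ^ 2 := by positivity

lemma Jk_cont (k : ℕ) : Continuous (fun x : ℝ => sin x ^ (2*k) / (1 + sin x ^ 2)) := by
  apply Continuous.div
  · exact (continuous_sin.pow _)
  · continuity
  · exact fun x => (one_add_sin_sq_pos x).ne'

lemma Jk_intable (k : ℕ) (a b : ℝ) :
    IntervalIntegrable (fun x : ℝ => sin x ^ (2*k) / (1 + sin x ^ 2)) MeasureTheory.volume a b :=
  (Jk_cont k).intervalIntegrable a b

lemma prod_id (k : ℕ) : (∏ i ∈ Finset.range k, (2*(i:ℝ)+1)/(2*(i:ℝ)+2)) = bseq k := by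
  induction k with
  | zero => simp [bseq, Nat.centralBinom]
  | succ k ih =>
    rw [Finset.prod_range_succ, ih, bseq, bseq]
    have h := Nat.succ_mul_centralBinom_succ k
    have h' : ((k:ℝ)+1) * (Nat.centralBinom (k+1) : ℝ) = 2*(2*(k:ℝ)+1) * (Nat.centralBinom k : ℝ) := by
      exact_mod_cast congrArg (Nat.cast : ℕ → ℝ) h
    have hk1 : ((k:ℝ)+1) ≠ 0 := by positivity
    have e : (Nat.centralBinom (k+1):ℝ) = 2*(2*(k:ℝ)+1) * (Nat.centralBinom k:ℝ) / ((k:ℝ)+1) := by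
      rw [eq_div_iff hk1]; linarith [h']
    rw [e, pow_succ]
    have h4 : (4:ℝ)^k ≠ 0 := by positivity
    field_simp
    ring

lemma wallis (k : ℕ) : (∫ x in (0:ℝ)..π, sin x ^ (2*k)) = π * bseq k := by
  rw [integral_sin_pow_even, prod_id]

lemma Jk_add (k : ℕ) : Jk k + Jk (k+1) = π * bseq k := by
  rw [Jk, Jk, ← integral_add (Jk_intable k 0 π) (Jk_intable (k+1) 0 π), ← wallis k]
  apply integral_congr
  intro x _
  have h := (one_add_sin_sq_pos x).ne'
  field_simp
  ring

lemma Jk_nonneg (k : ℕ) : 0 ≤ Jk k := by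
  apply intervalIntegral.integral_nonneg pi_pos.le
  intro x _
  have h0 : (0:ℝ) ≤ sin x ^ (2*k) := (even_two_mul k).pow_nonneg _
  exact div_nonneg h0 (one_add_sin_sq_pos x).le

lemma Jk_antitone (k : ℕ) : Jk (k+1) ≤ Jk k := by
  apply intervalIntegral.integral_mono_on pi_pos.le (Jk_intable (k+1) 0 π) (Jk_intable k 0 π)
  intro x hx
  have h0 : 0 ≤ sin x := sin_nonneg_of_nonneg_of_le_pi hx.1 hx.2
  have hnum : sin x ^ (2*(k+1)) ≤ sin x ^ (2*k) :=
    pow_le_pow_of_le_one h0 (sin_le_one x) (by omega)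
  gcongr

lemma Jk_le_pi (k : ℕ) : Jk k ≤ π := by
  have h : Jk k ≤ ∫ x in (0:ℝ)..π, (1:ℝ) := by
    apply intervalIntegral.integral_mono_on pi_pos.le (Jk_intable k 0 π)
      (intervalIntegrable_const)
    intro x hx
    have h0 : 0 ≤ sin x := sin_nonneg_of_nonneg_of_le_pi hx.1 hx.2
    rw [div_le_one (one_add_sin_sq_pos x)]
    have h1 : sin x ^ (2*k) ≤ 1 := pow_le_one₀ h0 (sin_le_one x)
    nlinarith [sq_nonneg (sin x)]
  simpa using h

/-! ### The value of `J 0` -/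

def gg (x : ℝ) : ℝ := 1 / (1 + sin x ^ 2)

lemma gg_cont : Continuous gg := by
  apply Continuous.div continuous_const (by continuity)
  exact fun x => (one_add_sin_sq_pos x).ne'

lemma gg_intable (a b : ℝ) : IntervalIntegrable gg MeasureTheory.volume a b :=
  gg_cont.intervalIntegrable a b

lemma gg_nonneg (x : ℝ) : 0 ≤ gg x :=
  div_nonneg zero_le_one (one_add_sin_sq_pos x).le

lemma gg_le_one (x : ℝ) : gg x ≤ 1 := by
  rw [gg, div_le_one (one_add_sin_sq_pos x)]
  nlinarith [sq_nonneg (sin x)]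

/-- antiderivative of `gg` on `[0, π/2)` -/
def Hfun (x : ℝ) : ℝ := (Real.sqrt 2)⁻¹ * arctan (Real.sqrt 2 * tan x)

lemma Hfun_deriv {x : ℝ} (hx : x ∈ Set.Ico (0:ℝ) (π/2)) : HasDerivAt Hfun (gg x) x := by
  have hcos : cos x ≠ 0 := by
    apply ne_of_gt
    apply cos_pos_of_mem_Ioo
    constructor
    · linarith [hx.1, pi_pos]
    · exact hx.2
  have ht : HasDerivAt tan (1 / cos x ^ 2) x := hasDerivAt_tan hcos
  have ht2 : HasDerivAt (fun y => Real.sqrt 2 * tan y) (Real.sqrt 2 * (1 / cos x ^ 2)) x :=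
    ht.const_mul _
  have ha : HasDerivAt arctan (1 / (1 + (Real.sqrt 2 * tan x) ^ 2)) (Real.sqrt 2 * tan x) :=
    hasDerivAt_arctan _
  have hcomp := (ha.comp x ht2).const_mul (Real.sqrt 2)⁻¹
  refine hcomp.congr_deriv (Eq.symm ?_)
  have hs2 : Real.sqrt 2 ^ 2 = 2 := Real.sq_sqrt (by norm_num)
  have hsne : Real.sqrt 2 ≠ 0 := by positivity
  have hcos2 : cos x ^ 2 ≠ 0 := pow_ne_zero _ hcos
  have hpyth : sin x ^ 2 + cos x ^ 2 = 1 := sin_sq_add_cos_sq x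
  rw [gg]
  rw [mul_pow, hs2]
  have hden : (1 + 2 * tan x ^ 2) * cos x ^ 2 = 1 + sin x ^ 2 := by
    rw [tan_eq_sin_div_cos]
    field_simp
    nlinarith [hpyth]
  have hne : (1 + 2 * tan x ^ 2) ≠ 0 := by
    nlinarith [sq_nonneg (tan x)]
  field_simp
  nlinarith [hden, hs2]

lemma Phi_eq (b : ℝ) (hb : b ∈ Set.Ico (0:ℝ) (π/2)) :
    (∫ x in (0:ℝ)..b, gg x) = Hfun b - Hfun 0 := by
  apply intervalIntegral.integral_eq_sub_of_hasDerivAt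
  · intro x hx
    apply Hfun_deriv
    rw [Set.uIcc_of_le hb.1] at hx
    exact ⟨hx.1, lt_of_le_of_lt hx.2 hb.2⟩
  · exact gg_intable 0 b

lemma Phi_half : (∫ x in (0:ℝ)..(π/2), gg x) = (Real.sqrt 2)⁻¹ * (π/2) := by
  have hpi : (0:ℝ) < π/2 := by linarith [pi_pos]
  set L := nhdsWithin (π/2 : ℝ) (Set.Iio (π/2)) with hL
  have hne : L.NeBot := by rw [hL]; infer_instance
  -- limit of Hfun b - Hfun 0
  have h1 : Filter.Tendsto (fun b => Hfun b - Hfun 0) L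
      (nhds ((Real.sqrt 2)⁻¹ * (π/2))) := by
    have htan : Filter.Tendsto tan L Filter.atTop := tendsto_tan_pi_div_two
    have hmul : Filter.Tendsto (fun b => Real.sqrt 2 * tan b) L Filter.atTop :=
      Filter.Tendsto.const_mul_atTop (by positivity) htan
    have harc : Filter.Tendsto (fun b => arctan (Real.sqrt 2 * tan b)) L (nhds (π/2)) :=
      (tendsto_arctan_atTop.mono_right nhdsWithin_le_nhds).comp hmul
    have hH : Filter.Tendsto Hfun L (nhds ((Real.sqrt 2)⁻¹ * (π/2))) :=
      harc.const_mul _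
    have h0 : Hfun 0 = 0 := by
      rw [Hfun, tan_zero, mul_zero, arctan_zero, mul_zero]
    rw [show ((Real.sqrt 2)⁻¹ * (π/2)) = (Real.sqrt 2)⁻¹ * (π/2) - 0 by ring]
    exact hH.sub_const 0 |>.congr (by intro b; rw [h0])
  -- limit of the primitive
  have h2 : Filter.Tendsto (fun b => ∫ x in (0:ℝ)..b, gg x) L
      (nhds (∫ x in (0:ℝ)..(π/2), gg x)) := by
    rw [Metric.tendsto_nhdsWithin_nhds]
    intro ε hε
    refine ⟨ε, hε, fun {b} hb hdist => ?_⟩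
    have hadj := intervalIntegral.integral_add_adjacent_intervals
      (gg_intable 0 b) (gg_intable b (π/2))
    have hbound : ‖∫ x in b..(π/2), gg x‖ ≤ 1 * |π/2 - b| := by
      apply intervalIntegral.norm_integral_le_of_norm_le_const
      intro x _
      rw [Real.norm_eq_abs, abs_of_nonneg (gg_nonneg x)]
      exact gg_le_one x
    rw [Real.norm_eq_abs] at hbound
    rw [Real.dist_eq] at hdist ⊢
    calc |(∫ x in (0:ℝ)..b, gg x) - ∫ x in (0:ℝ)..(π/2), gg x|
        = |∫ x in b..(π/2), gg x| := by rw [abs_sub_comm, show (∫ x in (0:ℝ)..(π/2), gg x) - ∫ x in (0:ℝ)..b, gg x = ∫ x in b..(π/2), gg x by linarith [hadj]]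
      _ ≤ 1 * |π/2 - b| := hbound
      _ = |b - π/2| := by rw [one_mul, abs_sub_comm]
      _ < ε := hdist
  -- the two functions agree on the filter
  have heq : ∀ᶠ b in L, (∫ x in (0:ℝ)..b, gg x) = Hfun b - Hfun 0 := by
    have hmem : Set.Ico (0:ℝ) (π/2) ∈ L := by
      rw [hL, ← nhdsWithin_Ico_eq_nhdsLT hpi]
      exact self_mem_nhdsWithin
    filter_upwards [hmem] with b hb
    exact Phi_eq b hb
  have h1' : Filter.Tendsto (fun b => ∫ x in (0:ℝ)..b, gg x) L
      (nhds ((Real.sqrt 2)⁻¹ * (π/2))) := Filter.Tendsto.congr' (heq.mono fun _ h => h.symm) h1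
  exact tendsto_nhds_unique h2 h1'

lemma J0_val : Jk 0 = π / Real.sqrt 2 := by
  have hrefl : (∫ x in (π/2:ℝ)..π, gg x) = ∫ x in (0:ℝ)..(π/2), gg x := by
    have := intervalIntegral.integral_comp_sub_left (a := (π/2:ℝ)) (b := π) (fun x => gg x) π
    rw [show π - π = 0 by ring, show π - π/2 = π/2 by ring] at this
    rw [← this]
    apply intervalIntegral.integral_congr
    intro x _
    simp only [gg, sin_pi_sub]
  have hJ : Jk 0 = ∫ x in (0:ℝ)..π, gg x := by
    rw [Jk]
    apply intervalIntegral.integral_congr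
    intro x _
    simp [gg]
  rw [hJ, ← intervalIntegral.integral_add_adjacent_intervals (gg_intable 0 (π/2)) (gg_intable (π/2) π),
      hrefl, Phi_half]
  have hsne : Real.sqrt 2 ≠ 0 := by positivity
  field_simp
  ring


section PolySec
open Polynomial
lemma coeff_one_sub_X_pow (n k : ℕ) :
    ((1 - X : Polynomial ℝ)^n).coeff k = (-1:ℝ)^k * (n.choose k) := by
  have h : (1 - X : Polynomial ℝ)^n
      = ∑ j ∈ Finset.range (n+1), C ((-1:ℝ)^j * (n.choose j)) * X^j := by
    rw [sub_eq_add_neg, add_comm, add_pow]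
    refine Finset.sum_congr rfl fun j hj => ?_
    rw [one_pow, mul_one, neg_pow]
    rw [map_mul, map_pow, map_neg, map_one, C_eq_natCast]
    ring
  rw [h, finset_sum_coeff]
  simp only [coeff_C_mul, coeff_X_pow, mul_ite, mul_one, mul_zero]
  by_cases hk : k ≤ n
  · rw [Finset.sum_ite_eq (Finset.range (n+1)) k (fun j => (-1:ℝ)^j * (n.choose j)),
      if_pos (Finset.mem_range.mpr (by omega))]
  · have hz : ∀ j ∈ Finset.range (n+1), (if k = j then (-1:ℝ)^j * (n.choose j) else 0) = 0 := by
      intro j hj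
      rw [if_neg]
      have := Finset.mem_range.mp hj
      omega
    rw [Finset.sum_eq_zero hz, Nat.choose_eq_zero_of_lt (by omega)]
    norm_num

lemma Kc_diag (n : ℕ) :
    Kc n n = if Even n then (-1:ℝ)^(n/2) * ((n.choose (n/2)):ℝ) else 0 := by
  have h1 : (((1 - X : Polynomial ℝ))^n * ((1+X))^n).coeff n = Kc n n := by
    rw [Polynomial.coeff_mul, Finset.Nat.sum_antidiagonal_eq_sum_range_succ_mk, Kc]
    refine Finset.sum_congr rfl fun k hk => ?_
    have hkn : k ≤ n := Nat.le_of_lt_succ (Finset.mem_range.mp hk)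
    rw [coeff_one_sub_X_pow, coeff_one_add_X_pow, Nat.choose_symm hkn]
  have hexp : ((1:Polynomial ℝ) - X^2)^n
      = ∑ j ∈ Finset.range (n+1), C ((-1:ℝ)^j * (n.choose j)) * X^(2*j) := by
    rw [sub_eq_add_neg, add_comm, add_pow]
    refine Finset.sum_congr rfl fun j hj => ?_
    rw [one_pow, mul_one, neg_pow, ← pow_mul]
    rw [map_mul, map_pow, map_neg, map_one, C_eq_natCast]
    ring
  have h2 : (((1:Polynomial ℝ) - X^2)^n).coeff n
      = if Even n then (-1:ℝ)^(n/2) * ((n.choose (n/2)):ℝ) else 0 := by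
    rw [hexp, finset_sum_coeff]
    simp only [coeff_C_mul, coeff_X_pow, mul_ite, mul_one, mul_zero]
    by_cases hev : Even n
    · obtain ⟨m, hm⟩ := hev
      rw [if_pos ⟨m, hm⟩]
      rw [Finset.sum_eq_single m (fun j _ hj => by rw [if_neg (by omega)])
        (fun h => absurd (Finset.mem_range.mpr (by omega)) h)]
      rw [if_pos (by omega), show n/2 = m by omega]
    · rw [if_neg hev]
      apply Finset.sum_eq_zero
      intro j hj
      rw [if_neg]
      intro hc
      exact hev ⟨j, by omega⟩
  calc Kc n n = (((1 - X : Polynomial ℝ))^n * ((1+X))^n).coeff n := h1.symm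
    _ = ((((1 - X) * (1 + X)) : Polynomial ℝ)^n).coeff n := by rw [mul_pow]
    _ = (((1:Polynomial ℝ) - X^2)^n).coeff n := by congr 2; ring
    _ = _ := h2

end PolySec


/-! ### Sequence assembly -/

open Real

def Tp (K : ℕ) : ℝ := ∑ i ∈ Finset.range K, (-1:ℝ)^i * bseq i

lemma Tp_J (K : ℕ) : π * Tp K = Jk 0 - (-1:ℝ)^K * Jk K := by
  induction K with
  | zero => simp [Tp]
  | succ K ih =>
    have hstep : Tp (K+1) = Tp K + (-1:ℝ)^K * bseq K := Finset.sum_range_succ _ _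
    have hJ := Jk_add K
    rw [hstep, mul_add, ih, show π * ((-1:ℝ)^K * bseq K) = (-1:ℝ)^K * (π * bseq K) by ring,
      ← hJ, pow_succ]
    ring

lemma alt_bound : ∀ (K s : ℕ), 0 ≤ (∑ i ∈ Finset.range K, (-1:ℝ)^i * Jk (s+i)) ∧
    (∑ i ∈ Finset.range K, (-1:ℝ)^i * Jk (s+i)) ≤ Jk s := by
  intro K
  induction K with
  | zero =>
    intro s
    simp [Jk_nonneg s]
  | succ K ih =>
    intro s
    have hrw : (∑ i ∈ Finset.range (K+1), (-1:ℝ)^i * Jk (s+i))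
        = Jk s - ∑ i ∈ Finset.range K, (-1:ℝ)^i * Jk ((s+1)+i) := by
      rw [Finset.sum_range_succ' (fun i => (-1:ℝ)^i * Jk (s+i))]
      have hterm : ∀ i ∈ Finset.range K,
          (-1:ℝ)^(i+1) * Jk (s+(i+1)) = -((-1:ℝ)^i * Jk ((s+1)+i)) := by
        intro i _
        rw [show s+(i+1) = (s+1)+i by omega, pow_succ]
        ring
      rw [Finset.sum_congr rfl hterm, Finset.sum_neg_distrib]
      simp only [pow_zero, one_mul, Nat.add_zero]
      ring
    obtain ⟨h1, h2⟩ := ih (s+1)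
    constructor
    · rw [hrw]
      linarith [Jk_antitone s]
    · rw [hrw]
      linarith [Jk_nonneg s]

lemma cval_even (i : ℕ) : V (2*(2*i)+1) 0 = (-1:ℝ)^i * (Nat.centralBinom i : ℝ) := by
  rw [Vcenter, Kc_diag, if_pos (even_two_mul i), show (2*i)/2 = i by omega, Nat.centralBinom]

lemma cval_odd (i : ℕ) : V (2*(2*i+1)+1) 0 = 0 := by
  rw [Vcenter, Kc_diag, if_neg]
  rintro ⟨m, hm⟩
  omega

lemma Bn_zero : Bn 0 = 0 := by
  have : ∀ x : ℤ, V 0 x ^ 2 = 0 := fun x => by rw [V_zero]; norm_num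
  rw [Bn]
  simp only [this]
  exact tsum_zero

lemma Mn_zero : Mn 0 = 1 := by
  rw [Mn, tsum_eq_single (1:ℤ) ?_]
  · rw [U_zero, V_zero, if_pos rfl]
    norm_num
  · intro x hx
    rw [U_zero, V_zero, if_neg hx]
    norm_num

lemma Bn_rec (n : ℕ) : Bn (n+1) = 2 * Bn n + V (2*n+1) 0 := by
  have h1 := Bn_succ_eq n
  have h2 := g4 n
  linarith

lemma Mn_rec (n : ℕ) : Mn (n+1) = 2 * Mn n + 2^(n+1) - 2 * Bn (n+1) := by
  have h1 := Mn_succ n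
  have h2 := Bn_succ_eq n
  have h3 := Pn_eq n
  have h4 : (2:ℝ)^(n+1) = 2 * 2^n := by ring
  linarith

lemma two_pow_two_mul (i : ℕ) : (2:ℝ)^(2*i) = 4^i := by
  rw [pow_mul]
  norm_num

lemma Bn_closed : ∀ n : ℕ, Bn n = 2^n * Tp ((n+1)/2) / 2 := by
  intro n
  induction n with
  | zero =>
    rw [Bn_zero, show (0+1)/2 = 0 by omega, Tp]
    simp
  | succ n ih =>
    rw [Bn_rec, ih]
    rcases Nat.even_or_odd n with ⟨i, hi⟩ | ⟨i, hi⟩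
    · have hn : n = 2*i := by omega
      subst hn
      rw [show 2*(2*i)+1 = 2*(2*i)+1 from rfl, cval_even i,
        show (2*i+1)/2 = i by omega, show (2*i+1+1)/2 = i+1 by omega,
        show Tp (i+1) = Tp i + (-1:ℝ)^i * bseq i from Finset.sum_range_succ _ _, bseq]
      have h4 : (4:ℝ)^i ≠ 0 := by positivity
      rw [pow_succ, two_pow_two_mul i]
      field_simp
    · have hn : n = 2*i+1 := by omega
      subst hn
      rw [cval_odd i, show (2*i+1+1)/2 = i+1 by omega, show (2*i+1+1+1)/2 = i+1 by omega]
      rw [pow_succ]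
      ring

lemma Mn_closed : ∀ N : ℕ, Mn N = 2^N * (1 + N - ∑ n ∈ Finset.range N, Tp ((n+2)/2)) := by
  intro N
  induction N with
  | zero =>
    rw [Mn_zero]
    simp
  | succ N ih =>
    rw [Mn_rec, ih, Bn_closed (N+1), Finset.sum_range_succ, show (N+1+1)/2 = (N+2)/2 from rfl]
    push_cast
    ring

def Esum (N : ℕ) : ℝ := ∑ n ∈ Finset.range N, (-1:ℝ)^((n+2)/2) * Jk ((n+2)/2)

lemma Esum_succ (N : ℕ) : Esum (N+1) = Esum N + (-1:ℝ)^((N+2)/2) * Jk ((N+2)/2) :=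
  Finset.sum_range_succ _ _

lemma Esum_even (M : ℕ) : Esum (2*M) = 2 * ∑ i ∈ Finset.range M, (-1:ℝ)^(i+1) * Jk (i+1) := by
  induction M with
  | zero => simp [Esum]
  | succ M ih =>
    have h1 : 2*(M+1) = (2*M+1)+1 := by omega
    rw [h1, Esum_succ, Esum_succ, ih, Finset.sum_range_succ,
      show (2*M+2)/2 = M+1 by omega, show (2*M+1+2)/2 = M+1 by omega]
    ring

lemma abs_A_le (M : ℕ) : |∑ i ∈ Finset.range M, (-1:ℝ)^(i+1) * Jk (i+1)| ≤ π := by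
  have hA : (∑ i ∈ Finset.range M, (-1:ℝ)^(i+1) * Jk (i+1))
      = -∑ i ∈ Finset.range M, (-1:ℝ)^i * Jk (1+i) := by
    rw [← Finset.sum_neg_distrib]
    refine Finset.sum_congr rfl fun i _ => ?_
    rw [show 1+i = i+1 by omega, pow_succ]
    ring
  obtain ⟨h1, h2⟩ := alt_bound M 1
  rw [hA, abs_neg, abs_of_nonneg h1]
  exact h2.trans (Jk_le_pi 1)

lemma Esum_bound (N : ℕ) : |Esum N| ≤ 3 * π := by
  have hπ := pi_pos
  rcases Nat.even_or_odd N with ⟨M, hM⟩ | ⟨M, hM⟩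
  · have hN : N = 2*M := by omega
    subst hN
    rw [Esum_even, abs_mul, abs_of_nonneg (by norm_num : (0:ℝ) ≤ 2)]
    have := abs_A_le M
    linarith
  · have hN : N = 2*M+1 := by omega
    subst hN
    rw [show 2*M+1 = (2*M)+1 from rfl, Esum_succ, Esum_even,
      show (2*M+2)/2 = M+1 by omega]
    have h1 := abs_A_le M
    have h2 : |(-1:ℝ)^(M+1) * Jk (M+1)| ≤ π := by
      rw [abs_mul, abs_pow, abs_neg, abs_one, one_pow, one_mul,
        abs_of_nonneg (Jk_nonneg (M+1))]
      exact Jk_le_pi (M+1)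
    calc |2 * (∑ i ∈ Finset.range M, (-1:ℝ)^(i+1) * Jk (i+1)) + (-1:ℝ)^(M+1) * Jk (M+1)|
        ≤ |2 * (∑ i ∈ Finset.range M, (-1:ℝ)^(i+1) * Jk (i+1))| + |(-1:ℝ)^(M+1) * Jk (M+1)| :=
          abs_add_le _ _
      _ ≤ 2 * π + π := by
          rw [abs_mul, abs_of_nonneg (by norm_num : (0:ℝ) ≤ 2)]
          linarith
      _ = 3 * π := by ring

theorem Mn_bound (N : ℕ) : |Mn N / 2^N - (1 - (Real.sqrt 2)⁻¹) * (N+1)| ≤ 4 := by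
  have hπ := pi_pos
  have h2N : (2:ℝ)^N ≠ 0 := by positivity
  have hq : Jk 0 = π * (Real.sqrt 2)⁻¹ := by
    rw [J0_val, div_eq_mul_inv]
  have hTp : ∀ K, Tp K = (Jk 0 - (-1:ℝ)^K * Jk K)/π := by
    intro K
    rw [eq_div_iff hπ.ne', mul_comm, Tp_J]
  have hsum : (∑ n ∈ Finset.range N, Tp ((n+2)/2)) = ((N:ℝ) * Jk 0 - Esum N)/π := by
    have hEdef : Esum N = ∑ n ∈ Finset.range N, (-1:ℝ)^((n+2)/2) * Jk ((n+2)/2) := rfl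
    rw [Finset.sum_congr rfl (fun n _ => hTp ((n+2)/2)), ← Finset.sum_div, hEdef,
      Finset.sum_sub_distrib, Finset.sum_const, Finset.card_range, nsmul_eq_mul]
  have hMn : Mn N / 2^N = 1 + N - ((N:ℝ) * Jk 0 - Esum N)/π := by
    rw [Mn_closed N, hsum]
    field_simp
  rw [hMn]
  have hE := Esum_bound N
  have hEπ : |Esum N / π| ≤ 3 := by
    rw [abs_div, abs_of_pos hπ, div_le_iff₀ hπ]
    linarith [abs_nonneg (Esum N)]
  have hq1 : (Real.sqrt 2)⁻¹ ≤ 1 := by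
    rw [inv_le_one_iff₀]
    right
    have : (1:ℝ) ≤ Real.sqrt 2 := by
      rw [show (1:ℝ) = Real.sqrt 1 by rw [Real.sqrt_one]]
      exact Real.sqrt_le_sqrt (by norm_num)
    linarith
  have hq0 : 0 < (Real.sqrt 2)⁻¹ := by positivity
  have split : 1 + (N:ℝ) - ((N:ℝ) * Jk 0 - Esum N)/π - (1 - (Real.sqrt 2)⁻¹) * (N+1)
      = (Real.sqrt 2)⁻¹ + Esum N / π := by
    rw [hq]
    field_simp
    ring
  rw [split]
  calc |(Real.sqrt 2)⁻¹ + Esum N / π| ≤ |(Real.sqrt 2)⁻¹| + |Esum N / π| := abs_add_le _ _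
    _ ≤ 1 + 3 := by
        rw [abs_of_pos hq0]
        linarith
    _ = 4 := by norm_num



def pSum (n : ℕ) (x : ℤ) (σ : Bool) : ℂ :=
  ∑ f ∈ fcPaths (n+1) x, if fcStep f n = σ then (-Complex.I)^(fcTurns f) else 0

lemma fcStep_snoc_lt {n : ℕ} (g : Fin n → Bool) (b : Bool) {j : ℕ} (hj : j < n) :
    fcStep (Fin.snoc g b : Fin (n+1) → Bool) j = fcStep g j := by
  simp only [fcStep]
  rw [dif_pos (Nat.lt_succ_of_lt hj), dif_pos hj]
  have h : (⟨j, Nat.lt_succ_of_lt hj⟩ : Fin (n+1)) = Fin.castSucc ⟨j, hj⟩ := rfl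
  rw [h, Fin.snoc_castSucc]

lemma fcStep_snoc_last {n : ℕ} (g : Fin n → Bool) (b : Bool) :
    fcStep (Fin.snoc g b : Fin (n+1) → Bool) n = b := by
  simp only [fcStep]
  rw [dif_pos (Nat.lt_succ_self n)]
  have h : (⟨n, Nat.lt_succ_self n⟩ : Fin (n+1)) = Fin.last n := rfl
  rw [h, Fin.snoc_last]

lemma fcPos_snoc {n : ℕ} (g : Fin n → Bool) (b : Bool) :
    fcPos (Fin.snoc g b : Fin (n+1) → Bool) (n+1)
      = fcPos g n + (if b then 1 else -1) := by
  simp only [fcPos]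
  rw [Finset.sum_range_succ]
  congr 1
  · exact Finset.sum_congr rfl fun j hj => by
      rw [fcStep_snoc_lt g b (Finset.mem_range.mp hj)]
  · rw [fcStep_snoc_last]

lemma fcTurns_snoc {n : ℕ} (g : Fin (n+1) → Bool) (b : Bool) :
    fcTurns (Fin.snoc g b : Fin (n+2) → Bool)
      = fcTurns g + (if fcStep g n = b then 0 else 1) := by
  simp only [fcTurns]
  have h1 : (n+2) - 1 = n+1 := rfl
  have h2 : (n+1) - 1 = n := rfl
  rw [h1, h2, Finset.range_add_one, Finset.filter_insert]
  have hfilter : Finset.filter (fun i => fcStep (Fin.snoc g b : Fin (n+2) → Bool) i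
        ≠ fcStep (Fin.snoc g b : Fin (n+2) → Bool) (i+1)) (Finset.range n)
      = Finset.filter (fun i => fcStep g i ≠ fcStep g (i+1)) (Finset.range n) := by
    apply Finset.filter_congr
    intro i hi
    have hi' := Finset.mem_range.mp hi
    rw [fcStep_snoc_lt g b (by omega : i < n+1), fcStep_snoc_lt g b (by omega : i+1 < n+1)]
  have hstep : fcStep (Fin.snoc g b : Fin (n+2) → Bool) n = fcStep g n :=
    fcStep_snoc_lt g b (Nat.lt_succ_self n)
  have hlast : fcStep (Fin.snoc g b : Fin (n+2) → Bool) (n+1) = b :=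
    fcStep_snoc_last g b
  by_cases hc : fcStep g n = b
  · rw [if_neg (by rw [hstep, hlast]; simp [hc]), hfilter, if_pos hc]
    omega
  · rw [if_pos (by rw [hstep, hlast]; exact hc), if_neg hc,
      Finset.card_insert_of_notMem (fun hmem => by
        have := Finset.mem_range.mp (Finset.mem_of_mem_filter _ hmem)
        omega), hfilter]

lemma first_snoc {n : ℕ} (g : Fin (n+1) → Bool) (b : Bool) :
    (∀ i : Fin (n+2), (i:ℕ) = 0 → (Fin.snoc g b : Fin (n+2) → Bool) i = true)
      ↔ (∀ i : Fin (n+1), (i:ℕ) = 0 → g i = true) := by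
  constructor
  · intro h i hi
    have h2 := h (Fin.castSucc i) (by simpa using hi)
    rwa [Fin.snoc_castSucc] at h2
  · intro h i hi
    have hi2 : i = Fin.castSucc (⟨0, Nat.succ_pos n⟩ : Fin (n+1)) := by
      apply Fin.ext
      simpa using hi
    rw [hi2, Fin.snoc_castSucc]
    exact h _ rfl

def snocEquiv (n : ℕ) : ((Fin n → Bool) × Bool) ≃ (Fin (n+1) → Bool) where
  toFun p := Fin.snoc p.1 p.2
  invFun f := (Fin.init f, f (Fin.last n))
  left_inv p := by
    ext1
    · simp [Fin.init_snoc]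
    · simp [Fin.snoc_last]
  right_inv f := by
    simp [Fin.snoc_init_self]

lemma pSum_succ (n : ℕ) (x : ℤ) (σ : Bool) :
    pSum (n+1) x σ = pSum n (x - (if σ then 1 else -1)) σ
      + (-Complex.I) * pSum n (x - (if σ then 1 else -1)) (!σ) := by
  classical
  set y := x - (if σ then 1 else -1) with hy
  have hpoint : ∀ (g : Fin (n+1) → Bool) (b : Bool),
      (if ((∀ i : Fin (n+2), (i:ℕ)=0 → (Fin.snoc g b : Fin (n+2) → Bool) i = true)
            ∧ fcPos (Fin.snoc g b : Fin (n+2) → Bool) (n+2) = x)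
        then (if fcStep (Fin.snoc g b : Fin (n+2) → Bool) (n+1) = σ
          then (-Complex.I)^(fcTurns (Fin.snoc g b : Fin (n+2) → Bool)) else 0) else 0)
      = (if b = σ then 1 else 0) *
        (if ((∀ i : Fin (n+1), (i:ℕ)=0 → g i = true) ∧ fcPos g (n+1) = y)
          then ((if fcStep g n = σ then (-Complex.I)^(fcTurns g) else 0)
            + (-Complex.I) * (if fcStep g n = (!σ) then (-Complex.I)^(fcTurns g) else 0))
          else 0) := by
    intro g b
    rw [fcStep_snoc_last, fcPos_snoc, fcTurns_snoc]
    simp only [first_snoc]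
    by_cases hb : b = σ
    · subst hb
      rw [if_pos (rfl : b = b), if_pos (rfl : b = b), one_mul]
      have hpos : (fcPos g (n+1) + (if b then 1 else -1) = x) ↔ (fcPos g (n+1) = y) := by
        rw [hy]
        constructor <;> intro h <;> linarith
      by_cases hP : (∀ i : Fin (n+1), (i:ℕ)=0 → g i = true) ∧ fcPos g (n+1) = y
      · rw [if_pos ⟨hP.1, hpos.mpr hP.2⟩, if_pos hP]
        cases hst : fcStep g n <;> cases b <;> simp_all [pow_succ] <;> ring
      · rw [if_neg (fun hc => hP ⟨hc.1, hpos.mp hc.2⟩), if_neg hP]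
    · rw [if_neg hb, if_neg hb, zero_mul]
      simp
  calc pSum (n+1) x σ
      = ∑ f : Fin (n+2) → Bool, (if ((∀ i : Fin (n+2), (i:ℕ)=0 → f i = true) ∧ fcPos f (n+2) = x)
          then (if fcStep f (n+1) = σ then (-Complex.I)^(fcTurns f) else 0) else 0) := by
        rw [pSum, fcPaths, Finset.sum_filter]
    _ = ∑ p : (Fin (n+1) → Bool) × Bool,
          (if ((∀ i : Fin (n+2), (i:ℕ)=0 → (Fin.snoc p.1 p.2 : Fin (n+2) → Bool) i = true)
              ∧ fcPos (Fin.snoc p.1 p.2 : Fin (n+2) → Bool) (n+2) = x)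
          then (if fcStep (Fin.snoc p.1 p.2 : Fin (n+2) → Bool) (n+1) = σ
            then (-Complex.I)^(fcTurns (Fin.snoc p.1 p.2 : Fin (n+2) → Bool)) else 0) else 0) := by
        rw [← Equiv.sum_comp (snocEquiv (n+1))]
        rfl
    _ = ∑ g : Fin (n+1) → Bool, ∑ b : Bool, ((if b = σ then 1 else 0) *
          (if ((∀ i : Fin (n+1), (i:ℕ)=0 → g i = true) ∧ fcPos g (n+1) = y)
          then ((if fcStep g n = σ then (-Complex.I)^(fcTurns g) else 0)
            + (-Complex.I) * (if fcStep g n = (!σ) then (-Complex.I)^(fcTurns g) else 0))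
          else 0)) := by
        rw [Fintype.sum_prod_type]
        exact Finset.sum_congr rfl fun g _ => Finset.sum_congr rfl fun b _ => hpoint g b
    _ = ∑ g : Fin (n+1) → Bool,
          (if ((∀ i : Fin (n+1), (i:ℕ)=0 → g i = true) ∧ fcPos g (n+1) = y)
          then ((if fcStep g n = σ then (-Complex.I)^(fcTurns g) else 0)
            + (-Complex.I) * (if fcStep g n = (!σ) then (-Complex.I)^(fcTurns g) else 0))
          else 0) := by
        refine Finset.sum_congr rfl fun g _ => ?_
        rw [Fintype.sum_bool]
        cases σ <;> norm_num
    _ = pSum n y σ + (-Complex.I) * pSum n y (!σ) := by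
        rw [pSum, pSum, fcPaths, Finset.sum_filter, Finset.sum_filter, Finset.mul_sum,
          ← Finset.sum_add_distrib]
        refine Finset.sum_congr rfl fun g _ => ?_
        by_cases hP : (∀ i : Fin (n+1), (i:ℕ)=0 → g i = true) ∧ fcPos g (n+1) = y
        · rw [if_pos hP, if_pos hP, if_pos hP]
        · rw [if_neg hP, if_neg hP, if_neg hP]
          simp

lemma pSum_zero (x : ℤ) (σ : Bool) :
    pSum 0 x σ = if (x = 1 ∧ σ = true) then 1 else 0 := by
  classical
  rw [pSum, fcPaths, Finset.sum_filter,
    ← Equiv.sum_comp ((Equiv.funUnique (Fin 1) Bool).symm), Fintype.sum_bool]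
  have h1 : fcPos (fun _ => true : Fin 1 → Bool) 1 = 1 := by
    rw [fcPos, Finset.sum_range_one]
    simp [fcStep]
  have h2 : fcPos (fun _ => false : Fin 1 → Bool) 1 = -1 := by
    rw [fcPos, Finset.sum_range_one]
    simp [fcStep]
  have h3 : fcTurns (fun _ => true : Fin 1 → Bool) = 0 := by
    rw [fcTurns]
    simp
  have hstT : fcStep (fun _ => true : Fin 1 → Bool) 0 = true := by simp [fcStep]
  have hstF : fcStep (fun _ => false : Fin 1 → Bool) 0 = false := by simp [fcStep]
  have eT : (Equiv.funUnique (Fin 1) Bool).symm true = (fun _ => true : Fin 1 → Bool) := by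
    funext i; rfl
  have eF : (Equiv.funUnique (Fin 1) Bool).symm false = (fun _ => false : Fin 1 → Bool) := by
    funext i; rfl
  rw [eT, eF, h1, h2, h3, hstT, hstF]
  by_cases hx : x = 1 <;> by_cases hσ : σ = true
  · simp [hx, hσ]
  · simp [hx, hσ, Bool.not_eq_true σ ▸ hσ]
  · have : ¬((1:ℤ) = x) := fun h => hx h.symm
    simp [hx, hσ, this]
  · have : ¬((1:ℤ) = x) := fun h => hx h.symm
    simp [hx, hσ, this]

lemma pSum_eq : ∀ (n : ℕ) (x : ℤ), pSum n x true = ((U n x : ℝ) : ℂ)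
    ∧ pSum n x false = -Complex.I * ((V n x : ℝ) : ℂ) := by
  intro n
  induction n with
  | zero =>
    intro x
    constructor
    · rw [pSum_zero, U_zero]
      by_cases hx : x = 1 <;> simp [hx]
    · rw [pSum_zero, V_zero]
      simp
  | succ n ih =>
    intro x
    constructor
    · rw [pSum_succ n x true]
      simp only [Bool.not_true, if_true]
      rw [(ih (x-1)).1, (ih (x-1)).2, U_succ]
      have hI : (-Complex.I) * (-Complex.I * ((V n (x-1) : ℝ) : ℂ))
          = -((V n (x-1) : ℝ) : ℂ) := by
        rw [show (-Complex.I) * (-Complex.I * ((V n (x-1) : ℝ) : ℂ))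
            = (Complex.I*Complex.I) * ((V n (x-1) : ℝ) : ℂ) by ring, Complex.I_mul_I]
        ring
      rw [hI]
      push_cast
      ring
    · rw [pSum_succ n x false]
      simp only [Bool.not_false]
      rw [if_neg (show ¬(false = true) by simp), sub_neg_eq_add]
      rw [(ih (x+1)).1, (ih (x+1)).2, V_succ]
      push_cast
      ring

lemma path_sum_eq (n : ℕ) (x : ℤ) :
    (∑ f ∈ fcPaths (n+1) x, (-Complex.I)^(fcTurns f))
      = ((U n x : ℝ) : ℂ) - Complex.I * ((V n x : ℝ) : ℂ) := by
  have hsplit : (∑ f ∈ fcPaths (n+1) x, (-Complex.I)^(fcTurns f))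
      = pSum n x true + pSum n x false := by
    rw [pSum, pSum, ← Finset.sum_add_distrib]
    refine Finset.sum_congr rfl fun f _ => ?_
    cases h : fcStep f n <;> simp [h]
  rw [hsplit, (pSum_eq n x).1, (pSum_eq n x).2]
  ring

lemma amp_eq (ε : ℝ) (hε : ε ≠ 0) (n : ℕ) (x : ℤ) :
    fcAmp (1/ε) ε x (n+1)
      = (((2:ℝ) ^ ((1 - ((n+1:ℕ):ℝ)) / 2) * V n x : ℝ) : ℂ)
        + (((2:ℝ) ^ ((1 - ((n+1:ℕ):ℝ)) / 2) * U n x : ℝ) : ℂ) * Complex.I := by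
  have hme : (1/ε) * ε = 1 := one_div_mul_cancel hε
  have hm2 : (1/ε)^2 * ε^2 = 1 := by
    rw [show (1/ε)^2 * ε^2 = ((1/ε)*ε)^2 by ring, hme, one_pow]
  rw [fcAmp, hm2]
  have hterm : ∀ f : Fin (n+1) → Bool,
      (-Complex.I * (((1/ε : ℝ):ℂ) * ((ε:ℝ):ℂ)))^(fcTurns f) = (-Complex.I)^(fcTurns f) := by
    intro f
    rw [← Complex.ofReal_mul, hme]
    norm_num
  rw [show ((1:ℝ) + 1 : ℝ) = 2 by norm_num]
  rw [Finset.sum_congr rfl fun f _ => hterm f, path_sum_eq n x]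
  set c : ℝ := (2:ℝ) ^ ((1 - ((n+1:ℕ):ℝ)) / 2) with hc
  push_cast
  ring_nf
  rw [Complex.I_sq]
  ring

lemma prob_eq (ε : ℝ) (hε : ε ≠ 0) (n : ℕ) (x : ℤ) :
    (fcAmp (1/ε) ε x (n+1)).re^2 + (fcAmp (1/ε) ε x (n+1)).im^2
      = (U n x^2 + V n x^2) / 2^n := by
  rw [amp_eq ε hε n x]
  have hre : ((((2:ℝ) ^ ((1 - ((n+1:ℕ):ℝ)) / 2) * V n x : ℝ) : ℂ)
      + (((2:ℝ) ^ ((1 - ((n+1:ℕ):ℝ)) / 2) * U n x : ℝ) : ℂ) * Complex.I).re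
      = (2:ℝ) ^ ((1 - ((n+1:ℕ):ℝ)) / 2) * V n x := by
    simp
  have him : ((((2:ℝ) ^ ((1 - ((n+1:ℕ):ℝ)) / 2) * V n x : ℝ) : ℂ)
      + (((2:ℝ) ^ ((1 - ((n+1:ℕ):ℝ)) / 2) * U n x : ℝ) : ℂ) * Complex.I).im
      = (2:ℝ) ^ ((1 - ((n+1:ℕ):ℝ)) / 2) * U n x := by
    simp
  rw [hre, him]
  set c : ℝ := (2:ℝ) ^ ((1 - ((n+1:ℕ):ℝ)) / 2) with hcdef
  have hc2 : c^2 = ((2:ℝ)^n)⁻¹ := by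
    rw [hcdef, ← Real.rpow_natCast ((2:ℝ) ^ ((1 - ((n+1:ℕ):ℝ)) / 2)) 2,
      ← Real.rpow_mul (by norm_num : (0:ℝ) ≤ 2)]
    push_cast
    rw [show ((1 - ((n:ℝ)+1)) / 2 * 2) = -(n:ℝ) by ring, Real.rpow_neg (by norm_num : (0:ℝ) ≤ 2),
      Real.rpow_natCast]
  rw [show (c * V n x)^2 + (c * U n x)^2 = c^2 * (U n x^2 + V n x^2) by ring, hc2,
    inv_mul_eq_div]

end FC

/-- For the mass `m = 1/ε`, the expectation of the average electron velocity equals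
`1 − 1/√2 + O(ε/T)`, uniformly over all `ε > 0` and `T ∈ εℤ₊`. -/
theorem stmt3 : ∃ C : ℝ, 0 < C ∧ ∀ ε : ℝ, 0 < ε → ∀ N : ℕ, 0 < N →
    |(∑' X : ℤ, (ε * (X : ℝ) / (ε * N)) *
        ((fcAmp (1/ε) ε X N).re ^ 2 + (fcAmp (1/ε) ε X N).im ^ 2))
      - (1 - 1 / Real.sqrt 2)| ≤ C * (ε / (ε * N)) := by
  refine ⟨4, by norm_num, fun ε hε N hN => ?_⟩
  obtain ⟨n, rfl⟩ : ∃ n, N = n + 1 := ⟨N - 1, by omega⟩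
  have hεne : ε ≠ 0 := hε.ne'
  have hNpos : (0:ℝ) < ((n+1:ℕ):ℝ) := by positivity
  have h2n : (0:ℝ) < (2:ℝ)^n := by positivity
  have hLHS : (∑' X : ℤ, (ε * (X : ℝ) / (ε * ((n+1:ℕ):ℝ))) *
        ((fcAmp (1/ε) ε X (n+1)).re ^ 2 + (fcAmp (1/ε) ε X (n+1)).im ^ 2))
      = FC.Mn n / 2^n / ((n+1:ℕ):ℝ) := by
    have hterm : ∀ X : ℤ, (ε * (X : ℝ) / (ε * ((n+1:ℕ):ℝ))) *
        ((fcAmp (1/ε) ε X (n+1)).re ^ 2 + (fcAmp (1/ε) ε X (n+1)).im ^ 2)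
        = (1 / (((n+1:ℕ):ℝ) * 2^n)) * ((X:ℝ) * (FC.U n X^2 + FC.V n X^2)) := by
      intro X
      rw [FC.prob_eq ε hεne n X]
      field_simp
    rw [tsum_congr hterm, tsum_mul_left]
    rw [show FC.Mn n = ∑' x : ℤ, (x:ℝ) * (FC.U n x^2 + FC.V n x^2) from rfl,
      one_div_mul_eq_div, div_div, mul_comm ((2:ℝ)^n) (((n+1:ℕ):ℝ))]
  rw [hLHS]
  have hbound := FC.Mn_bound n
  have hdiv : |FC.Mn n / 2^n / ((n+1:ℕ):ℝ) - (1 - 1/Real.sqrt 2)|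
      ≤ 4 / ((n+1:ℕ):ℝ) := by
    rw [show (1 - 1/Real.sqrt 2) = (1 - (Real.sqrt 2)⁻¹) by rw [one_div]]
    have key : FC.Mn n / 2^n / ((n+1:ℕ):ℝ) - (1 - (Real.sqrt 2)⁻¹)
        = (FC.Mn n / 2^n - (1 - (Real.sqrt 2)⁻¹) * ((n:ℝ)+1)) / ((n+1:ℕ):ℝ) := by
      push_cast
      field_simp
    rw [key, abs_div, abs_of_pos hNpos]
    have hb2 : |FC.Mn n / 2^n - (1 - (Real.sqrt 2)⁻¹) * ((n:ℝ)+1)| ≤ 4 := by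
      have := FC.Mn_bound n
      push_cast at this ⊢
      convert this using 3
    gcongr
  have hrhs : 4 * (ε / (ε * ((n+1:ℕ):ℝ))) = 4 / ((n+1:ℕ):ℝ) := by
    rw [show ε / (ε * ((n+1:ℕ):ℝ)) = 1 / ((n+1:ℕ):ℝ) by
      field_simp]
    ring
  rw [hrhs]
  exact hdiv
end
end

section
/- For every ε > 0, m ≥ 0, and t ∈ εℤ₊, we have Σ_{x∈εℤ} a₁(x,t,m,ε) = sin(((t−ε)/ε)·arctan(mε)) and Σ_{x∈εℤ} a₂(x,t,m,ε) = cos(((t−ε)/ε)·arctan(mε)). -/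
noncomputable section

/-- turn set of a path -/
def fcT {n : ℕ} (f : Fin n → Bool) : Finset ℕ :=
  (Finset.range (n - 1)).filter fun i => fcStep f i ≠ fcStep f (i + 1)

/-- path from a turn set -/
def fcF (n : ℕ) (t : Finset ℕ) : Fin n → Bool :=
  fun i => decide ((t.filter (· < (i : ℕ))).card % 2 = 0)

lemma card_filter_succ (t : Finset ℕ) (i : ℕ) :
    (t.filter (· < i + 1)).card = (t.filter (· < i)).card + (if i ∈ t then 1 else 0) := by
  have h1 : t.filter (· < i + 1) = t.filter (· < i) ∪ t.filter (· = i) := by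
    ext j
    simp only [Finset.mem_filter, Finset.mem_union]
    constructor
    · rintro ⟨hj, hlt⟩
      rcases Nat.lt_succ_iff_lt_or_eq.mp hlt with h | h
      · exact Or.inl ⟨hj, h⟩
      · exact Or.inr ⟨hj, h⟩
    · rintro (⟨hj, h⟩ | ⟨hj, h⟩)
      · exact ⟨hj, Nat.lt_succ_of_lt h⟩
      · exact ⟨hj, h ▸ Nat.lt_succ_self i⟩
  have h2 : Disjoint (t.filter (· < i)) (t.filter (· = i)) := by
    simp only [Finset.disjoint_left, Finset.mem_filter]
    rintro j ⟨_, hlt⟩ ⟨_, rfl⟩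
    exact lt_irrefl _ hlt
  rw [h1, Finset.card_union_of_disjoint h2, Finset.filter_eq' t i]
  split <;> simp

lemma step_fcF (n : ℕ) (t : Finset ℕ) (i : ℕ) (hi : i < n) :
    fcStep (fcF n t) i = decide ((t.filter (· < i)).card % 2 = 0) := by
  simp [fcStep, fcF, hi]

lemma turn_fcF (n : ℕ) (t : Finset ℕ) (i : ℕ) (hi : i < n - 1) :
    (fcStep (fcF n t) i ≠ fcStep (fcF n t) (i + 1)) ↔ i ∈ t := by
  have h1 : i < n := lt_of_lt_of_le hi (Nat.sub_le n 1)
  have h2 : i + 1 < n := by omega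
  rw [step_fcF n t i h1, step_fcF n t (i + 1) h2, card_filter_succ]
  by_cases h : i ∈ t <;> simp [h, ne_eq, decide_eq_decide] <;> omega

lemma fcF_fcT {n : ℕ} (f : Fin n → Bool)
    (hf : ∀ i : Fin n, (i : ℕ) = 0 → f i = true) : fcF n (fcT f) = f := by
  have key : ∀ i : ℕ, i < n →
      fcStep f i = decide (((fcT f).filter (· < i)).card % 2 = 0) := by
    intro i
    induction i with
    | zero =>
      intro hi
      have : (fcT f).filter (· < 0) = ∅ := by
        simp [Finset.filter_eq_empty_iff]
      rw [this]
      simp only [Finset.card_empty, Nat.zero_mod, decide_eq_true_eq]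
      simp [fcStep, hi, hf ⟨0, hi⟩ rfl]
    | succ i ih =>
      intro hi
      have hi' : i < n := by omega
      have hin : i < n - 1 := by omega
      have hmem : i ∈ fcT f ↔ (fcStep f i ≠ fcStep f (i + 1)) := by
        simp [fcT, Finset.mem_range, hin]
      rw [card_filter_succ]
      have ihh := ih hi'
      by_cases ht : i ∈ fcT f
      · have hne := hmem.mp ht
        rw [if_pos ht]
        cases hsi : fcStep f i <;> cases hsi1 : fcStep f (i + 1) <;>
          simp_all [decide_eq_decide] <;> omega
      · have heq : fcStep f i = fcStep f (i + 1) := by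
          by_contra hne; exact ht (hmem.mpr hne)
        rw [if_neg ht]
        simp only [add_zero]
        rw [← heq, ihh]
    
  funext i
  have h := key i i.isLt
  have hstep : fcStep f (i : ℕ) = f i := by simp [fcStep, i.isLt]
  have hstep' : fcStep (fcF n (fcT f)) (i : ℕ) = fcF n (fcT f) i := by
    simp [fcStep, i.isLt]
  rw [← hstep', step_fcF n _ i i.isLt, ← h, hstep]

lemma fcT_fcF (n : ℕ) (t : Finset ℕ) (ht : t ⊆ Finset.range (n - 1)) :
    fcT (fcF n t) = t := by
  ext i
  simp only [fcT, Finset.mem_filter, Finset.mem_range]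
  constructor
  · rintro ⟨hi, hne⟩
    exact (turn_fcF n t i hi).mp hne
  · intro hi
    have hi' : i < n - 1 := Finset.mem_range.mp (ht hi)
    exact ⟨hi', (turn_fcF n t i hi').mpr hi⟩

lemma sum_turns (n : ℕ) (z : ℂ) :
    ∑ f ∈ Finset.univ.filter
        (fun f : Fin n → Bool => ∀ i : Fin n, (i : ℕ) = 0 → f i = true),
      z ^ fcTurns f = (1 + z) ^ (n - 1) := by
  have h : ∑ f ∈ Finset.univ.filter
        (fun f : Fin n → Bool => ∀ i : Fin n, (i : ℕ) = 0 → f i = true),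
      z ^ fcTurns f = ∑ t ∈ (Finset.range (n - 1)).powerset, z ^ t.card := by
    refine Finset.sum_nbij' fcT (fcF n) ?_ ?_ ?_ ?_ ?_
    · intro f _
      exact Finset.mem_powerset.mpr (Finset.filter_subset _ _)
    · intro t ht
      simp only [Finset.mem_filter, Finset.mem_univ, true_and]
      intro i hi
      simp only [fcF, hi]
      have : t.filter (· < 0) = ∅ := by simp [Finset.filter_eq_empty_iff]
      simp [this]
    · intro f hf
      simp only [Finset.mem_filter, Finset.mem_univ, true_and] at hf
      exact fcF_fcT f hf
    · intro t ht
      exact fcT_fcF n t (Finset.mem_powerset.mp ht)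
    · intro f _
      rfl
  rw [h]
  have := Finset.sum_pow_mul_eq_add_pow z 1 (Finset.range (n - 1))
  simp only [one_pow, mul_one, Finset.card_range] at this
  rw [this, add_comm z 1]

lemma fcPos_mem_Icc {n : ℕ} (f : Fin n → Bool) :
    fcPos f n ∈ Finset.Icc (-(n : ℤ)) (n : ℤ) := by
  rw [Finset.mem_Icc, fcPos]
  have h1 : (∑ j ∈ Finset.range n, (-1 : ℤ)) ≤
      ∑ j ∈ Finset.range n, (if fcStep f j then (1 : ℤ) else -1) := by
    apply Finset.sum_le_sum; intro j _; split <;> omega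
  have h2 : (∑ j ∈ Finset.range n, (if fcStep f j then (1 : ℤ) else -1)) ≤
      ∑ j ∈ Finset.range n, (1 : ℤ) := by
    apply Finset.sum_le_sum; intro j _; split <;> omega
  simp only [Finset.sum_const, Finset.card_range, smul_eq_mul, mul_one, mul_neg_one, nsmul_eq_mul] at h1 h2
  omega

lemma fcAmp_eq_zero (m ε : ℝ) (n : ℕ) (x : ℤ)
    (hx : x ∉ Finset.Icc (-(n : ℤ)) (n : ℤ)) : fcAmp m ε x n = 0 := by
  have : fcPaths n x = ∅ := by
    rw [Finset.eq_empty_iff_forall_notMem]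
    intro f hf
    simp only [fcPaths, Finset.mem_filter, Finset.mem_univ, true_and] at hf
    exact hx (hf.2 ▸ fcPos_mem_Icc f)
  simp [fcAmp, this]

lemma sum_fcAmp (m ε : ℝ) (n : ℕ) :
    ∑ x ∈ Finset.Icc (-(n : ℤ)) (n : ℤ), fcAmp m ε x n =
      (((1 + m ^ 2 * ε ^ 2) ^ ((1 - (n : ℝ)) / 2) : ℝ) : ℂ) * Complex.I *
        (1 + -Complex.I * (m * ε)) ^ (n - 1) := by
  simp only [fcAmp]
  rw [← Finset.mul_sum]
  congr 1
  rw [← sum_turns n (-Complex.I * (m * ε))]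
  have hP : ∀ x : ℤ, fcPaths n x =
      (Finset.univ.filter
        (fun f : Fin n → Bool => ∀ i : Fin n, (i : ℕ) = 0 → f i = true)).filter
        (fun f => fcPos f n = x) := by
    intro x
    simp [fcPaths, Finset.filter_filter]
  calc ∑ x ∈ Finset.Icc (-(n : ℤ)) (n : ℤ),
        ∑ f ∈ fcPaths n x, (-Complex.I * (m * ε)) ^ fcTurns f
      = ∑ x ∈ Finset.Icc (-(n : ℤ)) (n : ℤ),
        ∑ f ∈ (Finset.univ.filter
          (fun f : Fin n → Bool => ∀ i : Fin n, (i : ℕ) = 0 → f i = true)).filter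
          (fun f => fcPos f n = x), (-Complex.I * (m * ε)) ^ fcTurns f := by
        exact Finset.sum_congr rfl fun x _ => by rw [hP x]
    _ = _ := Finset.sum_fiberwise_of_maps_to (fun f _ => fcPos_mem_Icc f) _

/-- Linear identities: for `t = εn ∈ εℤ₊`,
`Σ_x a₁(x,t,m,ε) = sin(((t−ε)/ε)·arctan(mε))` and
`Σ_x a₂(x,t,m,ε) = cos(((t−ε)/ε)·arctan(mε))`. -/
theorem stmt4 (m ε : ℝ) (hε : 0 < ε) (hm : 0 ≤ m) (t : ℝ) (n : ℕ) (hn : 0 < n)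
    (ht : t = ε * n) :
    (∑' X : ℤ, (fcAmp m ε X n).re
        = Real.sin (((t - ε) / ε) * Real.arctan (m * ε))) ∧
    (∑' X : ℤ, (fcAmp m ε X n).im
        = Real.cos (((t - ε) / ε) * Real.arctan (m * ε))) := by
  set θ := Real.arctan (m * ε) with hθ
  set S := Finset.Icc (-(n : ℤ)) (n : ℤ) with hS
  have hr0 : (0 : ℝ) < 1 + m ^ 2 * ε ^ 2 := by positivity
  set r := Real.sqrt (1 + m ^ 2 * ε ^ 2) with hrdef
  have hrpos : 0 < r := Real.sqrt_pos.mpr hr0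
  have hsq : 1 + (m * ε) ^ 2 = 1 + m ^ 2 * ε ^ 2 := by ring
  have hcos : Real.cos θ = 1 / r := by rw [hθ, Real.cos_arctan, hsq]
  have hsin : Real.sin θ = m * ε / r := by rw [hθ, Real.sin_arctan, hsq]
  -- the base of the power
  have h1 : (1 : ℂ) + -Complex.I * (m * ε) =
      (r : ℂ) * Complex.exp ((-θ : ℝ) * Complex.I) := by
    rw [Complex.ofReal_neg, Complex.exp_mul_I, Complex.cos_neg, Complex.sin_neg,
      ← Complex.ofReal_cos, ← Complex.ofReal_sin, hcos, hsin]
    have : (r : ℂ) ≠ 0 := Complex.ofReal_ne_zero.mpr hrpos.ne'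
    field_simp
    push_cast
    linear_combination (-(1 - Complex.I * (m : ℂ) * (ε : ℂ))) * (mul_inv_cancel₀ this)
  -- the normalization: C * r^(n-1) = 1
  have hCr : (1 + m ^ 2 * ε ^ 2) ^ ((1 - (n : ℝ)) / 2) * r ^ (n - 1) = 1 := by
    rw [hrdef, Real.sqrt_eq_rpow, ← Real.rpow_natCast _ (n - 1),
      ← Real.rpow_mul hr0.le, ← Real.rpow_add hr0]
    have : ((n - 1 : ℕ) : ℝ) = (n : ℝ) - 1 := by
      rw [Nat.cast_sub hn]; norm_num
    rw [this]
    have : (1 - (n : ℝ)) / 2 + 1 / 2 * ((n : ℝ) - 1) = 0 := by ring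
    rw [this, Real.rpow_zero]
  -- total complex sum
  have hT : ∑ x ∈ S, fcAmp m ε x n =
      Complex.I * Complex.exp ((-(((n : ℝ) - 1) * θ) : ℝ) * Complex.I) := by
    rw [sum_fcAmp, h1, mul_pow, ← Complex.exp_nat_mul]
    have hnat : ((n - 1 : ℕ) : ℂ) * ((-θ : ℝ) * Complex.I) =
        ((-(((n : ℝ) - 1) * θ) : ℝ) : ℂ) * Complex.I := by
      push_cast [Nat.cast_sub hn]
      ring
    rw [hnat]
    have : ((r : ℂ)) ^ (n - 1) = ((r ^ (n - 1) : ℝ) : ℂ) := by push_cast; ring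
    rw [this]
    rw [show (((1 + m ^ 2 * ε ^ 2) ^ ((1 - (n : ℝ)) / 2) : ℝ) : ℂ) * Complex.I *
        (((r ^ (n - 1) : ℝ) : ℂ) * Complex.exp (((-(((n : ℝ) - 1) * θ) : ℝ) : ℂ) * Complex.I)) =
        ((((1 + m ^ 2 * ε ^ 2) ^ ((1 - (n : ℝ)) / 2) * r ^ (n - 1) : ℝ)) : ℂ) *
          (Complex.I * Complex.exp (((-(((n : ℝ) - 1) * θ) : ℝ) : ℂ) * Complex.I)) by
      push_cast; ring]
    rw [hCr]
    simp
  have hzero : ∀ x : ℤ, x ∉ S → fcAmp m ε x n = 0 := fun x hx => fcAmp_eq_zero m ε n x hx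
  have hcoef : (t - ε) / ε = (n : ℝ) - 1 := by
    rw [ht]; field_simp
  constructor
  · rw [show (fun X : ℤ => (fcAmp m ε X n).re) = fun X => (fcAmp m ε X n).re from rfl]
    rw [tsum_eq_sum (s := S) (fun x hx => by rw [hzero x hx]; rfl)]
    rw [← Complex.re_sum, hT, hcoef, Complex.mul_re, Complex.I_re, Complex.I_im,
      Complex.exp_ofReal_mul_I_re, Complex.exp_ofReal_mul_I_im, Real.sin_neg, Real.cos_neg]
    ring
  · rw [tsum_eq_sum (s := S) (fun x hx => by rw [hzero x hx]; rfl)]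
    rw [← Complex.im_sum, hT, hcoef, Complex.mul_im, Complex.I_re, Complex.I_im,
      Complex.exp_ofReal_mul_I_re, Complex.exp_ofReal_mul_I_im, Real.sin_neg, Real.cos_neg]
    ring
end
end
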